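/- arXiv:math/0307269 — 8 statements merged into one kernel-verified Lean document; each statement's English description precedes it below -/
import Mathlib

section
/- For 0 ≤ i ≤ D−1 we have E_{i+1}*A_iE_1* − E_i*A_{i+1}E_1* = Σ_{h=0}^{i} A_hE_1* − Σ_{h=0}^{i} E_h*JE_1*. -/
open Matrix Polynomial BigOperators

noncomputable section

variable {X : Type*} [Fintype X] [DecidableEq X]

/-- The `i`-th distance matrix of the graph `G` (indexed by `ℤ`; by convention it is
the zero matrix for `i < 0` and also for `i` larger than the diameter). -/
def distMat (G : SimpleGraph X) (i : ℤ) : Matrix X X ℂ :=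
  Matrix.of fun y z => if (G.dist y z : ℤ) = i then (1 : ℂ) else 0

/-- The all-ones matrix `J`. -/
def allOnes (X : Type*) : Matrix X X ℂ := Matrix.of fun _ _ => (1 : ℂ)

/-- The `i`-th dual idempotent `Eᵢ*` with respect to the base point `x`
(indexed by `ℤ`; zero for `i < 0` and for `i` larger than the diameter). -/
def dualIdem (G : SimpleGraph X) (x : X) (i : ℤ) : Matrix X X ℂ :=
  Matrix.of fun y z => if y = z ∧ (G.dist x y : ℤ) = i then (1 : ℂ) else 0

/-- The characteristic vector `sᵢ` of the `i`-th sphere around `x`. -/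
def sphereVec (G : SimpleGraph X) (x : X) (i : ℤ) : X → ℂ :=
  fun y => if (G.dist x y : ℤ) = i then (1 : ℂ) else 0

/-- `G` is distance-regular with diameter `D` and intersection numbers `p h i j`:
`G` is connected with diameter `D`, and for all `h,i,j ≤ D` and all vertices `y,z`
at distance `h`, the number of vertices `w` with `dist y w = i` and `dist w z = j`
equals `p h i j`. -/
def IsDRG (G : SimpleGraph X) (D : ℕ) (p : ℕ → ℕ → ℕ → ℕ) : Prop :=
  G.Connected ∧ (∀ y z : X, G.dist y z ≤ D) ∧ (∃ y z : X, G.dist y z = D) ∧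
    ∀ h i j : ℕ, h ≤ D → i ≤ D → j ≤ D → ∀ y z : X, G.dist y z = h →
      (Finset.univ.filter fun w => G.dist y w = i ∧ G.dist w z = j).card = p h i j

/-- The Bose–Mesner algebra `M`, the subalgebra of `Mat_X(ℂ)` generated by the
adjacency matrix. -/
def bmAlg (G : SimpleGraph X) : Subalgebra ℂ (Matrix X X ℂ) :=
  Algebra.adjoin ℂ {distMat G 1}

/-- The Terwilliger algebra `T`, generated by `A, E₀*, …, E_D*`. -/
def twAlg (G : SimpleGraph X) (x : X) (D : ℕ) : Subalgebra ℂ (Matrix X X ℂ) :=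
  Algebra.adjoin ℂ ({distMat G 1} ∪ {B | ∃ i : ℕ, i ≤ D ∧ B = dualIdem G x (i : ℤ)})

/-- `W` is a `T`-module. -/
def IsTMod (G : SimpleGraph X) (x : X) (D : ℕ) (W : Submodule ℂ (X → ℂ)) : Prop :=
  ∀ B ∈ twAlg G x D, ∀ w ∈ W, B.mulVec w ∈ W

/-- `W` is an irreducible `T`-module. -/
def IsIrredTMod (G : SimpleGraph X) (x : X) (D : ℕ) (W : Submodule ℂ (X → ℂ)) : Prop :=
  IsTMod G x D W ∧ W ≠ ⊥ ∧
    ∀ U : Submodule ℂ (X → ℂ), U ≤ W → IsTMod G x D U → U = ⊥ ∨ U = W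

/-- `W` is thin: `dim Eᵢ* W ≤ 1` for `0 ≤ i ≤ D`. -/
def IsThin (G : SimpleGraph X) (x : X) (D : ℕ) (W : Submodule ℂ (X → ℂ)) : Prop :=
  ∀ i : ℕ, i ≤ D → Module.finrank ℂ (W.map (dualIdem G x (i : ℤ)).mulVecLin) ≤ 1

/-- `W` has endpoint `1`, i.e. `E₀* W = 0` and `E₁* W ≠ 0`. -/
def HasEndpointOne (G : SimpleGraph X) (x : X) (W : Submodule ℂ (X → ℂ)) : Prop :=
  W.map (dualIdem G x 0).mulVecLin = ⊥ ∧ W.map (dualIdem G x 1).mulVecLin ≠ ⊥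

/-- The linear map `P ↦ P v` on matrices. -/
def actOn (v : X → ℂ) : Matrix X X ℂ →ₗ[ℂ] (X → ℂ) where
  toFun P := P.mulVec v
  map_add' P Q := Matrix.add_mulVec P Q v
  map_smul' c P := by simp [Matrix.smul_mulVec]

/-- The subspace `(M; v) = {P ∈ M : P v ∈ E_D* V}`. -/
def MsubV (G : SimpleGraph X) (x : X) (D : ℕ) (v : X → ℂ) : Submodule ℂ (Matrix X X ℂ) :=
  (bmAlg G).toSubmodule ⊓
    Submodule.comap (actOn v) (LinearMap.range (dualIdem G x (D : ℤ)).mulVecLin)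

/-- The space `M(θ) = {Y ∈ M : (A - θI) Y ∈ ℂ A_D}` for `θ ∈ ℂ`. -/
def pseudoSpace (G : SimpleGraph X) (D : ℕ) (θ : ℂ) : Submodule ℂ (Matrix X X ℂ) :=
  (bmAlg G).toSubmodule ⊓
    Submodule.comap (LinearMap.mulLeft ℂ (distMat G 1 - θ • 1))
      (Submodule.span ℂ {distMat G (D : ℤ)})

theorem stmt4_aux (n i : ℕ) :
    (∑ h ∈ Finset.range (i + 1), if (n : ℤ) = (h : ℤ) then (1 : ℂ) else 0) =
      if n ≤ i then 1 else 0 := by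
  simp only [Nat.cast_inj]
  rw [Finset.sum_ite_eq (Finset.range (i + 1)) n (fun _ => (1 : ℂ))]
  simp [Nat.lt_succ_iff]

theorem stmt4_pick (P : X → Prop) [DecidablePred P] (f : X → ℂ) (y : X) :
    (∑ w : X, if P w then if y = w then f w else 0 else 0) = if P y then f y else 0 := by
  have h : ∀ w, (if P w then if y = w then f w else 0 else 0) =
      if y = w then (if P w then f w else 0) else 0 := fun w => by split_ifs <;> rfl
  simp_rw [h, Finset.sum_ite_eq, Finset.mem_univ, if_true]

/-- For `0 ≤ i ≤ D-1`:
`E_{i+1}* A_i E₁* - Eᵢ* A_{i+1} E₁* = ∑_{h=0}^{i} A_h E₁* - ∑_{h=0}^{i} E_h* J E₁*`. -/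
theorem stmt4 (G : SimpleGraph X) (D : ℕ) (p : ℕ → ℕ → ℕ → ℕ)
    (hdrg : IsDRG G D p) (hD : 3 ≤ D) (x : X)
    (i : ℕ) (hi : i ≤ D - 1) :
    dualIdem G x ((i : ℤ) + 1) * distMat G (i : ℤ) * dualIdem G x 1 -
        dualIdem G x (i : ℤ) * distMat G ((i : ℤ) + 1) * dualIdem G x 1 =
      (∑ h ∈ Finset.range (i + 1), distMat G (h : ℤ) * dualIdem G x 1) -
        ∑ h ∈ Finset.range (i + 1), dualIdem G x (h : ℤ) * allOnes X * dualIdem G x 1 := by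
  obtain ⟨hconn, -⟩ := hdrg
  ext y z
  have t1 : G.dist x y ≤ G.dist x z + G.dist z y := hconn.dist_triangle
  have t2 : G.dist y z ≤ G.dist y x + G.dist x z := hconn.dist_triangle
  rw [SimpleGraph.dist_comm (u := z) (v := y)] at t1
  rw [SimpleGraph.dist_comm (u := y) (v := x)] at t2
  simp only [Matrix.sub_apply, Matrix.mul_apply, Matrix.sum_apply, dualIdem, distMat, allOnes,
    Matrix.of_apply, ite_and, Finset.sum_ite_eq, Finset.sum_ite_eq', Finset.mem_univ, if_true,
    mul_ite, ite_mul, one_mul, mul_one, mul_zero, zero_mul, Finset.sum_const_zero]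
  rw [stmt4_pick (fun w => (G.dist w z : ℤ) = (i : ℤ)), stmt4_pick (fun w => (G.dist w z : ℤ) = (i : ℤ) + 1)]
  have hswap : ∀ (C : Prop) [Decidable C] (n : ℕ),
      (∑ h ∈ Finset.range (i + 1), if C then (if (n : ℤ) = (h : ℤ) then (1 : ℂ) else 0) else 0) =
        if C then (if n ≤ i then (1:ℂ) else 0) else 0 := by
    intro C instC n
    by_cases hC : C
    · simp only [hC, if_true, stmt4_aux]
    · simp [hC]
  rw [hswap, hswap]
  split_ifs <;> (try norm_num) <;> (exfalso; omega)
end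
end

section
/- Let v be a vector in E_1*V which is orthogonal to s_1. Then for 0 ≤ i ≤ D−1 we have E_{i+1}*A_iv − E_i*A_{i+1}v = Σ_{h=0}^{i} A_hv. -/
open Matrix Polynomial BigOperators

noncomputable section

variable {X : Type*} [Fintype X] [DecidableEq X]

lemma dualIdem_mulVec (G : SimpleGraph X) (x : X) (m : ℤ) (w : X → ℂ) (y : X) :
    (dualIdem G x m).mulVec w y = if (G.dist x y : ℤ) = m then w y else 0 := by
  simp only [dualIdem, Matrix.mulVec, dotProduct, Matrix.of_apply, ite_and,
    ite_mul, one_mul, zero_mul]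
  rw [Finset.sum_ite_eq (Finset.univ) y (fun z => if (G.dist x y : ℤ) = m then w z else 0)]
  simp

lemma distMat_mulVec (G : SimpleGraph X) (j : ℤ) (w : X → ℂ) (y : X) :
    (distMat G j).mulVec w y = ∑ z, if (G.dist y z : ℤ) = j then w z else 0 := by
  simp [distMat, Matrix.mulVec, dotProduct, boole_mul]


/-- Let `v ∈ E₁* V` be orthogonal to `s₁`.  Then for `0 ≤ i ≤ D-1` we
have `E_{i+1}* A_i v - Eᵢ* A_{i+1} v = ∑_{h=0}^{i} A_h v`. -/
theorem stmt5 (G : SimpleGraph X) (D : ℕ) (p : ℕ → ℕ → ℕ → ℕ)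
    (hdrg : IsDRG G D p) (hD : 3 ≤ D) (x : X)
    (v : X → ℂ) (hvE1 : (dualIdem G x 1).mulVec v = v)
    (horth : ∑ y : X, v y * (starRingEnd ℂ) (sphereVec G x 1 y) = 0)
    (i : ℕ) (hi : i ≤ D - 1) :
    (dualIdem G x ((i : ℤ) + 1)).mulVec ((distMat G (i : ℤ)).mulVec v) -
        (dualIdem G x (i : ℤ)).mulVec ((distMat G ((i : ℤ) + 1)).mulVec v) =
      ∑ h ∈ Finset.range (i + 1), (distMat G (h : ℤ)).mulVec v := by
  obtain ⟨hconn, -, -, -⟩ := hdrg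
  have hv0 : ∀ z, G.dist x z ≠ 1 → v z = 0 := by
    intro z hz
    have h := (congrFun hvE1 z).symm
    rw [dualIdem_mulVec] at h
    rw [h, if_neg (by exact_mod_cast hz)]
  have hsum : ∑ z, v z = 0 := by
    rw [← horth]
    refine Finset.sum_congr rfl fun z _ => ?_
    by_cases h : G.dist x z = 1
    · simp [sphereVec, h]
    · simp [sphereVec, hv0 z h, (by exact_mod_cast h : ¬ ((G.dist x z : ℤ) = 1))]
  funext y
  have htri : ∀ z, v z ≠ 0 →
      G.dist y z ≤ G.dist x y + 1 ∧ G.dist x y ≤ G.dist y z + 1 := by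
    intro z hvz
    have h1 : G.dist x z = 1 := by by_contra h; exact hvz (hv0 z h)
    have t1 : G.dist y z ≤ G.dist y x + G.dist x z := hconn.dist_triangle
    have t2 : G.dist x y ≤ G.dist x z + G.dist z y := hconn.dist_triangle
    have c1 : G.dist y x = G.dist x y := SimpleGraph.dist_comm
    have c2 : G.dist z y = G.dist y z := SimpleGraph.dist_comm
    omega
  simp only [Pi.sub_apply, Finset.sum_apply]
  simp only [dualIdem_mulVec, distMat_mulVec]
  have hrhs : (∑ h ∈ Finset.range (i + 1), ∑ z, if (G.dist y z : ℤ) = (h : ℤ) then v z else 0)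
      = ∑ z, if G.dist y z ≤ i then v z else 0 := by
    rw [Finset.sum_comm]
    refine Finset.sum_congr rfl fun z _ => ?_
    simp only [Nat.cast_inj]
    rw [Finset.sum_ite_eq (Finset.range (i + 1)) (G.dist y z) (fun _ => v z),
    ]
    simp only [Finset.mem_range, Nat.lt_succ_iff]
  rw [hrhs]
  have hc1 : ((i : ℤ) + 1) = ((i + 1 : ℕ) : ℤ) := by push_cast; ring
  simp only [hc1, Nat.cast_inj]
  rcases Nat.lt_trichotomy (G.dist x y) i with hd | hd | hd
  · rw [if_neg (by omega), if_neg (by omega)]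
    have : ∑ z, (if G.dist y z ≤ i then v z else 0) = ∑ z, v z := by
      refine Finset.sum_congr rfl fun z _ => ?_
      by_cases hvz : v z = 0
      · simp [hvz]
      · have := htri z hvz; rw [if_pos (by omega)]
    rw [this, hsum, sub_zero]
  · rw [if_neg (by omega), if_pos hd]
    have key : ∀ z, (if G.dist y z ≤ i then v z else 0)
        + (if G.dist y z = i + 1 then v z else 0) = v z := by
      intro z
      by_cases hvz : v z = 0
      · simp [hvz]
      · have := htri z hvz
        by_cases h1 : G.dist y z ≤ i
        · rw [if_pos h1, if_neg (by omega), add_zero]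
        · rw [if_neg h1, if_pos (by omega), zero_add]
    have hs : (∑ z, if G.dist y z ≤ i then v z else 0)
        + (∑ z, if G.dist y z = i + 1 then v z else 0) = 0 := by
      rw [← Finset.sum_add_distrib]
      simp_rw [key]
      exact hsum
    linear_combination -hs
  · rcases Nat.lt_trichotomy (G.dist x y) (i + 1) with hd2 | hd2 | hd2
    · omega
    · rw [if_pos hd2, if_neg (by omega), sub_zero]
      refine Finset.sum_congr rfl fun z _ => ?_
      by_cases hvz : v z = 0
      · simp [hvz]
      · have := htri z hvz
        by_cases h1 : G.dist y z = i
        · rw [if_pos h1, if_pos (by omega)]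
        · rw [if_neg h1, if_neg (by omega)]
    · rw [if_neg (by omega), if_neg (by omega), sub_zero]
      refine (Finset.sum_eq_zero fun z _ => ?_).symm
      by_cases hvz : v z = 0
      · simp [hvz]
      · have := htri z hvz
        rw [if_neg (by omega)]
end
end

section
/- For every θ ∈ ℂ, the matrix Σ_{i=0}^{D} f_i(θ)·k_i^{−1}·A_i is a basis for M(θ); that is, it is a nonzero element of M(θ) and M(θ) equals its ℂ-span. -/
open Matrix Polynomial BigOperators

set_option linter.unusedSectionVars false
noncomputable section

variable {X : Type*} [Fintype X] [DecidableEq X]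

section Helpers

variable {X : Type*} [Fintype X] [DecidableEq X]

lemma drg_step (G : SimpleGraph X) (hc : G.Connected) {y z : X} {n : ℕ}
    (h : G.dist y z = n + 1) : ∃ w, G.dist y w = 1 ∧ G.dist w z = n := by
  obtain ⟨q, hq⟩ := (hc y z).exists_walk_length_eq_dist
  rw [h] at hq
  cases q with
  | nil => simp at hq
  | @cons _ w _ ha q' =>
    refine ⟨w, (SimpleGraph.dist_eq_one_iff_adj).2 ha, ?_⟩
    simp only [SimpleGraph.Walk.length_cons, Nat.succ_inj] at hq
    have h1 : G.dist w z ≤ n := hq ▸ SimpleGraph.dist_le q'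
    have h2 : G.dist y z ≤ G.dist y w + G.dist w z := hc.dist_triangle
    have h3 : G.dist y w ≤ 1 := SimpleGraph.dist_le (SimpleGraph.Walk.cons ha SimpleGraph.Walk.nil)
    omega

lemma drg_exists_dist (G : SimpleGraph X) (hc : G.Connected) :
    ∀ n : ℕ, ∀ y z : X, G.dist y z = n → ∀ m ≤ n, ∃ u v : X, G.dist u v = m := by
  intro n
  induction n with
  | zero => intro y z h m hm; exact ⟨y, z, by omega⟩
  | succ k ih =>
    intro y z h m hm
    rcases Nat.eq_or_lt_of_le hm with h1 | h1
    · exact ⟨y, z, by omega⟩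
    · obtain ⟨w, -, hw2⟩ := drg_step G hc h
      exact ih w z hw2 m (by omega)

lemma drg_count {G : SimpleGraph X} {D : ℕ} {p : ℕ → ℕ → ℕ → ℕ} (hdrg : IsDRG G D p)
    {h i j : ℕ} (hh : h ≤ D) (hi : i ≤ D) (hj : j ≤ D) {y z : X} (hyz : G.dist y z = h) :
    (Finset.univ.filter fun w => G.dist y w = i ∧ G.dist w z = j).card = p h i j :=
  hdrg.2.2.2 h i j hh hi hj y z hyz

lemma drg_exists {G : SimpleGraph X} {D : ℕ} {p : ℕ → ℕ → ℕ → ℕ} (hdrg : IsDRG G D p)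
    {m : ℕ} (hm : m ≤ D) : ∃ y z : X, G.dist y z = m := by
  obtain ⟨y, z, h⟩ := hdrg.2.2.1
  exact drg_exists_dist G hdrg.1 D y z h m hm

lemma drg_p000 {G : SimpleGraph X} {D : ℕ} {p : ℕ → ℕ → ℕ → ℕ} (hdrg : IsDRG G D p) :
    p 0 0 0 = 1 := by
  obtain ⟨x, _, -⟩ := hdrg.2.2.1
  rw [← drg_count hdrg (Nat.zero_le D) (Nat.zero_le D) (Nat.zero_le D) (SimpleGraph.dist_self (G := G) (v := x))]
  rw [show (Finset.univ.filter fun w => G.dist x w = 0 ∧ G.dist w x = 0) = {x} from ?_]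
  · simp
  · ext w
    simp [hdrg.1.dist_eq_zero_iff, eq_comm, and_self]

lemma drg_k_pos {G : SimpleGraph X} {D : ℕ} {p : ℕ → ℕ → ℕ → ℕ} (hdrg : IsDRG G D p)
    {i : ℕ} (hi : i ≤ D) : 0 < p 0 i i := by
  obtain ⟨y, w, h⟩ := drg_exists hdrg hi
  rw [← drg_count hdrg (Nat.zero_le D) hi hi (SimpleGraph.dist_self (G := G) (v := y))]
  refine Finset.card_pos.2 ⟨w, ?_⟩
  exact Finset.mem_filter.2 ⟨Finset.mem_univ w, h, (SimpleGraph.dist_comm (G := G) (u := w) (v := y)) ▸ h⟩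

lemma drg_c_pos {G : SimpleGraph X} {D : ℕ} {p : ℕ → ℕ → ℕ → ℕ} (hdrg : IsDRG G D p)
    {j : ℕ} (hj : j + 1 ≤ D) : 0 < p (j + 1) 1 j := by
  obtain ⟨y, z, h⟩ := drg_exists hdrg hj
  obtain ⟨w, hw1, hw2⟩ := drg_step G hdrg.1 h
  rw [← drg_count hdrg hj (by omega) (by omega) h]
  exact Finset.card_pos.2 ⟨w, by simp [hw1, hw2]⟩

lemma drg_b_pos {G : SimpleGraph X} {D : ℕ} {p : ℕ → ℕ → ℕ → ℕ} (hdrg : IsDRG G D p)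
    {j : ℕ} (hj : j + 1 ≤ D) : 0 < p j 1 (j + 1) := by
  obtain ⟨y, z, h⟩ := drg_exists hdrg hj
  obtain ⟨w, hw1, hw2⟩ := drg_step G hdrg.1 h
  rw [← drg_count hdrg (by omega) (by omega) hj hw2]
  refine Finset.card_pos.2 ⟨y, ?_⟩
  refine Finset.mem_filter.2 ⟨Finset.mem_univ y, ?_, h⟩
  rwa [SimpleGraph.dist_comm]

lemma drg_p_vanish {G : SimpleGraph X} {D : ℕ} {p : ℕ → ℕ → ℕ → ℕ} (hdrg : IsDRG G D p)
    {h i : ℕ} (hh : h ≤ D) (hi : i ≤ D) (hfar : h + 1 < i ∨ i + 1 < h) : p h 1 i = 0 := by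
  have hD1 : 1 ≤ D := by omega
  obtain ⟨y, z, hyz⟩ := drg_exists hdrg hh
  rw [← drg_count hdrg hh hD1 hi hyz]
  rw [Finset.card_eq_zero]
  rw [Finset.filter_eq_empty_iff]
  rintro w - ⟨hw1, hw2⟩
  have t1 : G.dist y z ≤ G.dist y w + G.dist w z := hdrg.1.dist_triangle
  have t2 : G.dist w z ≤ G.dist w y + G.dist y z := hdrg.1.dist_triangle
  have t3 : G.dist w y = G.dist y w := SimpleGraph.dist_comm
  omega

lemma drg_kb {G : SimpleGraph X} {D : ℕ} {p : ℕ → ℕ → ℕ → ℕ} (hdrg : IsDRG G D p)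
    {j : ℕ} (hj : j + 1 ≤ D) :
    p 0 j j * p j 1 (j + 1) = p 0 (j + 1) (j + 1) * p (j + 1) 1 j := by
  obtain ⟨x, _, -⟩ := hdrg.2.2.1
  have hjD : j ≤ D := by omega
  have h1D : 1 ≤ D := by omega
  have lhs : (∑ w : X, ∑ u : X, if G.dist x w = j ∧ (G.dist w u = 1 ∧ G.dist u x = j + 1)
      then 1 else 0) = p 0 j j * p j 1 (j + 1) := by
    have step1 : ∀ w : X, (∑ u : X, if G.dist x w = j ∧ (G.dist w u = 1 ∧ G.dist u x = j + 1)
        then 1 else 0) = if G.dist x w = j then p j 1 (j + 1) else 0 := by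
      intro w
      by_cases hw : G.dist x w = j
      · simp only [hw, true_and, if_pos]
        rw [← drg_count hdrg hjD h1D hj (by rwa [SimpleGraph.dist_comm] : G.dist w x = j)]
        rw [Finset.card_filter]
      · simp [hw]
    rw [Finset.sum_congr rfl fun w _ => step1 w]
    rw [Finset.sum_ite, Finset.sum_const, Finset.sum_const, smul_eq_mul, smul_eq_mul,
      mul_zero, add_zero]
    congr 1
    rw [← drg_count hdrg (Nat.zero_le D) hjD hjD (SimpleGraph.dist_self (G := G) (v := x))]
    congr 1
    apply Finset.filter_congr
    intro w _
    constructor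
    · intro hw; exact ⟨hw, by rwa [SimpleGraph.dist_comm]⟩
    · exact fun hw => hw.1
  have rhs : (∑ u : X, ∑ w : X, if G.dist x w = j ∧ (G.dist w u = 1 ∧ G.dist u x = j + 1)
      then 1 else 0) = p 0 (j + 1) (j + 1) * p (j + 1) 1 j := by
    have step1 : ∀ u : X, (∑ w : X, if G.dist x w = j ∧ (G.dist w u = 1 ∧ G.dist u x = j + 1)
        then 1 else 0) = if G.dist u x = j + 1 then p (j + 1) 1 j else 0 := by
      intro u
      by_cases hu : G.dist u x = j + 1
      · rw [if_pos hu]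
        rw [← drg_count hdrg hj h1D hjD hu]
        rw [Finset.card_filter]
        apply Finset.sum_congr rfl
        intro w _
        congr 1
        simp only [hu, and_true, eq_iff_iff]
        rw [SimpleGraph.dist_comm (u := x) (v := w), SimpleGraph.dist_comm (u := w) (v := u)]
        exact and_comm
      · simp [hu]
    rw [Finset.sum_congr rfl fun u _ => step1 u]
    rw [Finset.sum_ite, Finset.sum_const, Finset.sum_const, smul_eq_mul, smul_eq_mul,
      mul_zero, add_zero]
    congr 1
    rw [← drg_count hdrg (Nat.zero_le D) hj hj (SimpleGraph.dist_self (G := G) (v := x))]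
    congr 1
    apply Finset.filter_congr
    intro u _
    rw [SimpleGraph.dist_comm (u := x) (v := u)]
    exact ⟨fun hu => ⟨hu, hu⟩, fun hu => hu.1⟩
  rw [← lhs, ← rhs, Finset.sum_comm]

lemma distMat_apply_nat (G : SimpleGraph X) (i : ℕ) (u v : X) :
    distMat G (i : ℤ) u v = if G.dist u v = i then 1 else 0 := by
  simp [distMat]

lemma distMat_zero {G : SimpleGraph X} (hc : G.Connected) : distMat G (0 : ℤ) = 1 := by
  ext u v
  rw [show ((0:ℤ)) = ((0:ℕ) : ℤ) by norm_num, distMat_apply_nat, Matrix.one_apply]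
  simp [hc.dist_eq_zero_iff]

lemma sumA_apply {G : SimpleGraph X} {D : ℕ} (hle : ∀ u v : X, G.dist u v ≤ D)
    (y : ℕ → ℂ) (u v : X) :
    (∑ i ∈ Finset.range (D + 1), y i • distMat G (i : ℤ)) u v = y (G.dist u v) := by
  rw [Matrix.sum_apply]
  simp only [Matrix.smul_apply, distMat_apply_nat, smul_eq_mul, mul_ite, mul_one, mul_zero]
  rw [Finset.sum_ite_eq (Finset.range (D + 1)) (G.dist u v) y]
  rw [if_pos (Finset.mem_range.2 (by exact Nat.lt_succ_of_le (hle u v)))]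

lemma A1_mul_Ai {G : SimpleGraph X} {D : ℕ} {p : ℕ → ℕ → ℕ → ℕ} (hdrg : IsDRG G D p)
    (h1D : 1 ≤ D) {i : ℕ} (hi : i ≤ D) (u v : X) :
    (distMat G 1 * distMat G (i : ℤ)) u v = (p (G.dist u v) 1 i : ℂ) := by
  rw [Matrix.mul_apply]
  have : ∀ w : X, distMat G 1 u w * distMat G (i : ℤ) w v
      = if G.dist u w = 1 ∧ G.dist w v = i then 1 else 0 := by
    intro w
    rw [show ((1:ℤ)) = ((1:ℕ) : ℤ) by norm_num, distMat_apply_nat, distMat_apply_nat]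
    by_cases h1 : G.dist u w = 1 <;> by_cases h2 : G.dist w v = i <;> simp [h1, h2]
  rw [Finset.sum_congr rfl fun w _ => this w, Finset.sum_boole,
    drg_count hdrg (hdrg.2.1 u v) h1D hi rfl]

lemma mulA_apply {G : SimpleGraph X} {D : ℕ} {p : ℕ → ℕ → ℕ → ℕ} (hdrg : IsDRG G D p)
    (h1D : 1 ≤ D) (y : ℕ → ℂ) (u v : X) :
    (distMat G 1 * ∑ i ∈ Finset.range (D + 1), y i • distMat G (i : ℤ)) u v
      = ∑ i ∈ Finset.range (D + 1), (p (G.dist u v) 1 i : ℂ) * y i := by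
  rw [Matrix.mul_sum]
  simp only [Matrix.mul_smul]
  rw [Matrix.sum_apply]
  refine Finset.sum_congr rfl fun i hi => ?_
  rw [Matrix.smul_apply, A1_mul_Ai hdrg h1D (by have := Finset.mem_range.1 hi; omega) u v, smul_eq_mul, mul_comm]

/-- Coefficient of `A_j` in `(A - θ I) ∑ yᵢ Aᵢ`. -/
def drgG (D : ℕ) (p : ℕ → ℕ → ℕ → ℕ) (θ : ℂ) (y : ℕ → ℂ) (j : ℕ) : ℂ :=
  (∑ i ∈ Finset.range (D + 1), (p j 1 i : ℂ) * y i) - θ * y j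

lemma shift_apply {G : SimpleGraph X} {D : ℕ} {p : ℕ → ℕ → ℕ → ℕ} (hdrg : IsDRG G D p)
    (h1D : 1 ≤ D) (θ : ℂ) (y : ℕ → ℂ) (u v : X) :
    ((distMat G 1 - θ • 1) * ∑ i ∈ Finset.range (D + 1), y i • distMat G (i : ℤ)) u v
      = drgG D p θ y (G.dist u v) := by
  rw [Matrix.sub_mul, Matrix.smul_mul, Matrix.one_mul, Matrix.sub_apply, Matrix.smul_apply,
    mulA_apply hdrg h1D, sumA_apply hdrg.2.1, smul_eq_mul]
  rfl

lemma cond_iff {G : SimpleGraph X} {D : ℕ} {p : ℕ → ℕ → ℕ → ℕ} (hdrg : IsDRG G D p)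
    (h1D : 1 ≤ D) (θ : ℂ) (y : ℕ → ℂ) :
    ((distMat G 1 - θ • 1) * ∑ i ∈ Finset.range (D + 1), y i • distMat G (i : ℤ))
        ∈ Submodule.span ℂ {distMat G (D : ℤ)}
      ↔ ∀ j : ℕ, j + 1 ≤ D → drgG D p θ y j = 0 := by
  constructor
  · intro hmem j hj
    obtain ⟨α, hα⟩ := Submodule.mem_span_singleton.1 hmem
    obtain ⟨u, v, huv⟩ := drg_exists hdrg (show j ≤ D by omega)
    have := congrFun (congrFun hα u) v
    rw [Matrix.smul_apply, distMat_apply_nat, shift_apply hdrg h1D, huv] at this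
    rw [← this, if_neg (by omega), smul_zero]
  · intro hz
    refine Submodule.mem_span_singleton.2 ⟨drgG D p θ y D, ?_⟩
    ext u v
    rw [Matrix.smul_apply, distMat_apply_nat, shift_apply hdrg h1D]
    by_cases hd : G.dist u v = D
    · rw [hd, if_pos rfl, smul_eq_mul, mul_one]
    · rw [if_neg hd, smul_zero, hz (G.dist u v) (by have := hdrg.2.1 u v; omega)]

lemma drgG_eq {G : SimpleGraph X} {D : ℕ} {p : ℕ → ℕ → ℕ → ℕ} (hdrg : IsDRG G D p)
    (h1D : 1 ≤ D) (θ : ℂ) (y : ℕ → ℂ) {j : ℕ} (hj : j + 1 ≤ D) :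
    drgG D p θ y j = (if 1 ≤ j then (p j 1 (j - 1) : ℂ) * y (j - 1) else 0)
      + ((p j 1 j : ℂ) - θ) * y j + (p j 1 (j + 1) : ℂ) * y (j + 1) := by
  unfold drgG
  cases j with
  | zero =>
    rw [← Finset.sum_subset (show ({0, 1} : Finset ℕ) ⊆ Finset.range (D + 1) by
        intro t ht; simp only [Finset.mem_insert, Finset.mem_singleton] at ht
        rcases ht with rfl | rfl <;> exact Finset.mem_range.2 (by omega))]
    · rw [Finset.sum_pair (by norm_num)]
      simp only [if_neg (by norm_num : ¬ (1:ℕ) ≤ 0)]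
      ring
    · intro i hi hni
      simp only [Finset.mem_insert, Finset.mem_singleton, not_or] at hni
      rw [drg_p_vanish hdrg (by omega) (by exact Nat.lt_succ_iff.1 (Finset.mem_range.1 hi))
        (by omega), Nat.cast_zero, zero_mul]
  | succ m =>
    rw [← Finset.sum_subset (show ({m, m + 1, m + 2} : Finset ℕ) ⊆ Finset.range (D + 1) by
        intro t ht; simp only [Finset.mem_insert, Finset.mem_singleton] at ht
        rcases ht with rfl | rfl | rfl <;> exact Finset.mem_range.2 (by omega))]
    · rw [Finset.sum_insert (by simp), Finset.sum_insert (by simp),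
        Finset.sum_singleton]
      simp only [if_pos (by omega : 1 ≤ m + 1), Nat.add_sub_cancel]
      ring_nf
    · intro i hi hni
      simp only [Finset.mem_insert, Finset.mem_singleton, not_or] at hni
      rw [drg_p_vanish hdrg (by omega) (by exact Nat.lt_succ_iff.1 (Finset.mem_range.1 hi))
        (by omega), Nat.cast_zero, zero_mul]

lemma A1_mul_Ai_eq {G : SimpleGraph X} {D : ℕ} {p : ℕ → ℕ → ℕ → ℕ} (hdrg : IsDRG G D p)
    (h1D : 1 ≤ D) {i : ℕ} (hi : i ≤ D) :
    distMat G 1 * distMat G (i : ℤ)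
      = ∑ h ∈ Finset.range (D + 1), (p h 1 i : ℂ) • distMat G (h : ℤ) := by
  ext u v
  rw [A1_mul_Ai hdrg h1D hi, sumA_apply hdrg.2.1]

lemma Ai_mem_bm {G : SimpleGraph X} {D : ℕ} {p : ℕ → ℕ → ℕ → ℕ} (hdrg : IsDRG G D p)
    (h1D : 1 ≤ D) : ∀ i, i ≤ D → distMat G (i : ℤ) ∈ bmAlg G := by
  intro i
  induction i using Nat.strong_induction_on with
  | _ i ih =>
    rcases i with - | i
    · intro _
      rw [show (((0:ℕ)):ℤ) = 0 by norm_num, distMat_zero hdrg.1]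
      exact one_mem _
    rcases i with - | m
    · intro _
      rw [show (((1:ℕ)):ℤ) = 1 by norm_num]
      exact Algebra.subset_adjoin (Set.mem_singleton _)
    intro hi
    have hm1 : m + 1 ≤ D := by omega
    have heq := A1_mul_Ai_eq hdrg h1D hm1
    have hsplit := Finset.add_sum_erase (Finset.range (D + 1))
      (fun h => (p h 1 (m + 1) : ℂ) • distMat G (h : ℤ)) (Finset.mem_range.2 (by omega : m + 2 < D + 1))
    have hc : (p (m + 2) 1 (m + 1) : ℂ) ≠ 0 :=
      Nat.cast_ne_zero.2 (drg_c_pos hdrg (show m + 1 + 1 ≤ D by omega)).ne'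
    have hX : distMat G ((m + 2 : ℕ) : ℤ) = (p (m + 2) 1 (m + 1) : ℂ)⁻¹ •
        (distMat G 1 * distMat G ((m + 1 : ℕ) : ℤ)
          - ∑ h ∈ (Finset.range (D + 1)).erase (m + 2), (p h 1 (m + 1) : ℂ) • distMat G (h : ℤ)) := by
      rw [heq, ← hsplit]
      rw [add_sub_cancel_right, smul_smul, inv_mul_cancel₀ hc, one_smul]
    rw [hX]
    refine Subalgebra.smul_mem _ (sub_mem (mul_mem ?_ ?_) ?_) _
    · exact Algebra.subset_adjoin (Set.mem_singleton _)
    · exact ih (m + 1) (by omega) hm1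
    · refine sum_mem fun h hh => ?_
      have hhD : h ≤ D := by have := Finset.mem_range.1 (Finset.mem_of_mem_erase hh); omega
      have hne : h ≠ m + 2 := Finset.ne_of_mem_erase hh
      by_cases hle : h ≤ m + 1
      · exact Subalgebra.smul_mem _ (ih h (by omega) hhD) _
      · rw [drg_p_vanish hdrg hhD hm1 (Or.inr (by omega)), Nat.cast_zero, zero_smul]
        exact zero_mem _

lemma mulA_mem {G : SimpleGraph X} {D : ℕ} {p : ℕ → ℕ → ℕ → ℕ} (hdrg : IsDRG G D p)
    (h1D : 1 ≤ D) {B : Matrix X X ℂ}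
    (hB : B ∈ Submodule.span ℂ (Set.range fun i : Fin (D + 1) => distMat G ((i : ℕ) : ℤ))) :
    distMat G 1 * B ∈ Submodule.span ℂ (Set.range fun i : Fin (D + 1) => distMat G ((i : ℕ) : ℤ)) := by
  induction hB using Submodule.span_induction with
  | mem x hx =>
    obtain ⟨i, rfl⟩ := hx
    rw [A1_mul_Ai_eq hdrg h1D (show (i : ℕ) ≤ D by omega)]
    refine Submodule.sum_mem _ fun h hh => Submodule.smul_mem _ _ ?_
    exact Submodule.subset_span ⟨⟨h, Finset.mem_range.1 hh⟩, rfl⟩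
  | zero => rw [Matrix.mul_zero]; exact Submodule.zero_mem _
  | add x y _ _ hx hy => rw [Matrix.mul_add]; exact Submodule.add_mem _ hx hy
  | smul a x _ hx => rw [Matrix.mul_smul]; exact Submodule.smul_mem _ _ hx

lemma bm_eq_span {G : SimpleGraph X} {D : ℕ} {p : ℕ → ℕ → ℕ → ℕ} (hdrg : IsDRG G D p)
    (h1D : 1 ≤ D) :
    Subalgebra.toSubmodule (bmAlg G)
      = Submodule.span ℂ (Set.range fun i : Fin (D + 1) => distMat G ((i : ℕ) : ℤ)) := by
  apply le_antisymm
  · intro B hB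
    have hB' : B ∈ Algebra.adjoin ℂ {distMat G 1} := hB
    rw [Algebra.adjoin_singleton_eq_range_aeval] at hB'
    obtain ⟨q, rfl⟩ := hB'
    show (Polynomial.aeval (distMat G 1)) q ∈ _
    rw [Polynomial.aeval_eq_sum_range]
    refine Submodule.sum_mem _ fun n hn => Submodule.smul_mem _ _ ?_
    clear hn
    induction n with
    | zero =>
      rw [pow_zero, ← distMat_zero hdrg.1]
      exact Submodule.subset_span ⟨⟨0, by omega⟩, rfl⟩
    | succ n ihn =>
      rw [pow_succ']
      exact mulA_mem hdrg h1D ihn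
  · rw [Submodule.span_le]
    rintro B ⟨i, rfl⟩
    exact Ai_mem_bm hdrg h1D (i : ℕ) (by omega)

lemma unique_sol {G : SimpleGraph X} {D : ℕ} {p : ℕ → ℕ → ℕ → ℕ} (hdrg : IsDRG G D p)
    (h1D : 1 ≤ D) (θ : ℂ) (y : ℕ → ℂ)
    (hy : ∀ j, j + 1 ≤ D → drgG D p θ y j = 0) (hy0 : y 0 = 0) :
    ∀ j, j ≤ D → y j = 0 := by
  intro j
  induction j using Nat.strong_induction_on with
  | _ j ih =>
    intro hj
    rcases j with - | m
    · exact hy0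
    have hyd := hy m (by omega)
    rw [drgG_eq hdrg h1D θ y (by omega)] at hyd
    have h1 : y m = 0 := ih m (by omega) (by omega)
    have h2 : (if 1 ≤ m then (p m 1 (m - 1) : ℂ) * y (m - 1) else 0) = 0 := by
      rcases m with - | k
      · exact if_neg (by norm_num)
      · rw [if_pos (by omega)]
        rw [show (k + 1 - 1 : ℕ) = k from rfl, ih k (by omega) (by omega), mul_zero]
    rw [h1, h2, mul_zero, add_zero, zero_add] at hyd
    have hb : (p m 1 (m + 1) : ℂ) ≠ 0 :=
      Nat.cast_ne_zero.2 (drg_b_pos hdrg (show m + 1 ≤ D by omega)).ne'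
    exact (mul_eq_zero.1 hyd).resolve_left hb

lemma drgG_linear (D : ℕ) (p : ℕ → ℕ → ℕ → ℕ) (θ : ℂ) (y z : ℕ → ℂ) (c : ℂ) (j : ℕ) :
    drgG D p θ (fun n => y n - c * z n) j = drgG D p θ y j - c * drgG D p θ z j := by
  unfold drgG
  rw [Finset.sum_congr rfl (fun i _ => (by ring :
    (p j 1 i : ℂ) * (y i - c * z i) = (p j 1 i : ℂ) * y i - c * ((p j 1 i : ℂ) * z i)))]
  rw [Finset.sum_sub_distrib, ← Finset.mul_sum]
  ring

lemma rec_F {G : SimpleGraph X} {D : ℕ} {p : ℕ → ℕ → ℕ → ℕ} (hdrg : IsDRG G D p)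
    (h1D : 1 ≤ D) (f : ℕ → Polynomial ℂ) (hf0 : f 0 = 1)
    (hfrec0 : Polynomial.X * f 0 =
      Polynomial.C (p 0 1 0 : ℂ) * f 0 + Polynomial.C (p 1 1 0 : ℂ) * f 1)
    (hfrec : ∀ j : ℕ, 1 ≤ j → j ≤ D - 1 →
      Polynomial.X * f j =
        Polynomial.C (p (j - 1) 1 j : ℂ) * f (j - 1) +
        Polynomial.C (p j 1 j : ℂ) * f j +
        Polynomial.C (p (j + 1) 1 j : ℂ) * f (j + 1))
    (θ : ℂ) :
    ∀ j, j + 1 ≤ D → drgG D p θ (fun i => (f i).eval θ * ((p 0 i i : ℂ))⁻¹) j = 0 := by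
  intro j hj
  rw [drgG_eq hdrg h1D θ _ hj]
  rcases j with - | m
  · rw [if_neg (by norm_num)]
    have h0 : (p 0 0 0 : ℂ) = 1 := by rw [drg_p000 hdrg]; norm_num
    have hk1 : (p 0 1 1 : ℂ) ≠ 0 := Nat.cast_ne_zero.2 (drg_k_pos hdrg h1D).ne'
    have hkbC : (p 0 0 0 : ℂ) * (p 0 1 1 : ℂ) = (p 0 1 1 : ℂ) * (p 1 1 0 : ℂ) := by
      exact_mod_cast congrArg (Nat.cast (R := ℂ)) (drg_kb hdrg (show 0 + 1 ≤ D by omega))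
    have hc1 : (p 1 1 0 : ℂ) = 1 := by
      rw [h0, one_mul] at hkbC
      exact (mul_left_cancel₀ hk1 (show (p 0 1 1 : ℂ) * 1 = (p 0 1 1 : ℂ) * (p 1 1 0 : ℂ) by
        rw [mul_one, ← hkbC])).symm
    have he := congrArg (Polynomial.eval θ) hfrec0
    simp only [Polynomial.eval_mul, Polynomial.eval_add, Polynomial.eval_X, Polynomial.eval_C,
      hf0, Polynomial.eval_one, mul_one] at he
    rw [hf0, Polynomial.eval_one, h0, inv_one, mul_one, zero_add]
    rw [mul_comm ((f 1).eval θ) _, ← mul_assoc, mul_inv_cancel₀ hk1, one_mul]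
    linear_combination -he - ((f 1).eval θ) * hc1
  · rw [if_pos (by omega), Nat.add_sub_cancel]
    have hKm : (p 0 m m : ℂ) ≠ 0 := Nat.cast_ne_zero.2 (drg_k_pos hdrg (by omega)).ne'
    have hKm1 : (p 0 (m + 1) (m + 1) : ℂ) ≠ 0 :=
      Nat.cast_ne_zero.2 (drg_k_pos hdrg (by omega)).ne'
    have hKm2 : (p 0 (m + 2) (m + 2) : ℂ) ≠ 0 :=
      Nat.cast_ne_zero.2 (drg_k_pos hdrg (by omega)).ne'
    have hkb1C : (p 0 m m : ℂ) * (p m 1 (m + 1) : ℂ)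
        = (p 0 (m + 1) (m + 1) : ℂ) * (p (m + 1) 1 m : ℂ) := by
      exact_mod_cast congrArg (Nat.cast (R := ℂ)) (drg_kb hdrg (show m + 1 ≤ D by omega))
    have hkb2C : (p 0 (m + 1) (m + 1) : ℂ) * (p (m + 1) 1 (m + 2) : ℂ)
        = (p 0 (m + 2) (m + 2) : ℂ) * (p (m + 2) 1 (m + 1) : ℂ) := by
      exact_mod_cast congrArg (Nat.cast (R := ℂ)) (drg_kb hdrg (show m + 1 + 1 ≤ D by omega))
    have he := congrArg (Polynomial.eval θ) (hfrec (m + 1) (by omega) (by omega))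
    simp only [Polynomial.eval_mul, Polynomial.eval_add, Polynomial.eval_X, Polynomial.eval_C,
      Nat.add_sub_cancel] at he
    field_simp
    linear_combination (-(f m).eval θ * (p 0 (m + 2) (m + 2) : ℂ)) * hkb1C
      + ((p 0 m m : ℂ) * (f (m + 2)).eval θ) * hkb2C
      - ((p 0 m m : ℂ) * (p 0 (m + 2) (m + 2) : ℂ)) * he

end Helpers

/-- For every `θ ∈ ℂ`, the matrix `F = ∑_{i=0}^{D} fᵢ(θ) kᵢ⁻¹ Aᵢ` is a
basis for `M(θ)`: it is a nonzero element of `M(θ)` and `M(θ)` is its `ℂ`-span. -/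
theorem stmt9 (G : SimpleGraph X) (D : ℕ) (p : ℕ → ℕ → ℕ → ℕ)
    (hdrg : IsDRG G D p) (hD : 3 ≤ D)
    (f : ℕ → Polynomial ℂ) (hf0 : f 0 = 1)
    (hfrec0 : Polynomial.X * f 0 =
      Polynomial.C (p 0 1 0 : ℂ) * f 0 + Polynomial.C (p 1 1 0 : ℂ) * f 1)
    (hfrec : ∀ j : ℕ, 1 ≤ j → j ≤ D - 1 →
      Polynomial.X * f j =
        Polynomial.C (p (j - 1) 1 j : ℂ) * f (j - 1) +
        Polynomial.C (p j 1 j : ℂ) * f j +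
        Polynomial.C (p (j + 1) 1 j : ℂ) * f (j + 1))
    (θ : ℂ) (F : Matrix X X ℂ)
    (hF : F = ∑ i ∈ Finset.range (D + 1),
      ((f i).eval θ * ((p 0 i i : ℂ))⁻¹) • distMat G (i : ℤ)) :
    F ≠ 0 ∧ F ∈ pseudoSpace G D θ ∧ pseudoSpace G D θ = Submodule.span ℂ {F} := by
  have h1D : 1 ≤ D := by omega
  obtain ⟨u0, -, -⟩ := hdrg.2.2.1
  set yF : ℕ → ℂ := fun i => (f i).eval θ * ((p 0 i i : ℂ))⁻¹ with hyFdef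
  have hFsum : F = ∑ i ∈ Finset.range (D + 1), yF i • distMat G (i : ℤ) := hF
  have hrecF : ∀ j, j + 1 ≤ D → drgG D p θ yF j = 0 :=
    rec_F hdrg h1D f hf0 hfrec0 hfrec θ
  have hyF0 : yF 0 = 1 := by
    simp [hyFdef, hf0, drg_p000 hdrg]
  have hFentry : ∀ u v : X, F u v = yF (G.dist u v) := fun u v => by
    rw [hFsum, sumA_apply hdrg.2.1]
  have hFne : F ≠ 0 := by
    intro h0
    have h1 := hFentry u0 u0
    rw [h0, SimpleGraph.dist_self, hyF0] at h1
    exact one_ne_zero h1.symm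
  have hFbm : F ∈ Subalgebra.toSubmodule (bmAlg G) := by
    rw [bm_eq_span hdrg h1D, hFsum]
    exact Submodule.sum_mem _ fun i hi => Submodule.smul_mem _ _
      (Submodule.subset_span ⟨⟨i, Finset.mem_range.1 hi⟩, rfl⟩)
  have hFmem : F ∈ pseudoSpace G D θ := by
    refine Submodule.mem_inf.2 ⟨hFbm, ?_⟩
    simp only [Submodule.mem_comap, LinearMap.mulLeft_apply]
    rw [hFsum]
    exact (cond_iff hdrg h1D θ yF).2 hrecF
  refine ⟨hFne, hFmem, le_antisymm ?_ ?_⟩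
  · intro Y hY
    obtain ⟨hYbm, hYc⟩ := Submodule.mem_inf.1 hY
    rw [bm_eq_span hdrg h1D] at hYbm
    obtain ⟨c, hc⟩ := (Submodule.mem_span_range_iff_exists_fun ℂ).1 hYbm
    set y : ℕ → ℂ := fun n => if h : n < D + 1 then c ⟨n, h⟩ else 0 with hy
    have hYsum : Y = ∑ i ∈ Finset.range (D + 1), y i • distMat G (i : ℤ) := by
      rw [← hc, ← Fin.sum_univ_eq_sum_range (fun n => y n • distMat G (n : ℤ)) (D + 1)]
      exact (Finset.sum_congr rfl fun i _ => by simp [hy, i.isLt, Nat.lt_succ_iff.1 i.isLt]).symm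
    have hYg : ∀ j, j + 1 ≤ D → drgG D p θ y j = 0 := by
      apply (cond_iff hdrg h1D θ y).1
      rw [← hYsum]
      simpa only [Submodule.mem_comap, LinearMap.mulLeft_apply] using hYc
    have hkey : ∀ j, j ≤ D → y j - y 0 * yF j = 0 := by
      apply unique_sol hdrg h1D θ _ ?_ (by rw [hyF0]; ring)
      intro j hj
      rw [drgG_linear D p θ y yF (y 0) j, hYg j hj, hrecF j hj, mul_zero, sub_zero]
    refine Submodule.mem_span_singleton.2 ⟨y 0, ?_⟩
    rw [hFsum, hYsum, Finset.smul_sum]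
    refine Finset.sum_congr rfl fun i hi => ?_
    rw [smul_smul]
    congr 1
    have h := hkey i (Nat.lt_succ_iff.1 (Finset.mem_range.1 hi))
    linear_combination -h
  · rw [Submodule.span_le, Set.singleton_subset_iff]
    exact hFmem
end
end

section
/- For every θ ∈ ℂ, the subspace M(θ) has dimension 1; moreover M(∞) = ℂA_D has dimension 1. -/
open Matrix Polynomial BigOperators

noncomputable section

variable {X : Type*} [Fintype X] [DecidableEq X]

namespace Stmt10Aux

variable {G : SimpleGraph X} {D : ℕ} {p : ℕ → ℕ → ℕ → ℕ}

lemma distMat_apply (G : SimpleGraph X) (i : ℕ) (y z : X) :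
    distMat G (i : ℤ) y z = if G.dist y z = i then (1 : ℂ) else 0 := by
  simp [distMat]

lemma distMat_one_apply (G : SimpleGraph X) (y z : X) :
    distMat G 1 y z = if G.dist y z = 1 then (1 : ℂ) else 0 := by
  by_cases h : G.dist y z = 1
  · simp [distMat, h]
  · have h' : ¬((G.dist y z : ℤ) = 1) := by exact_mod_cast h
    simp [distMat, h, h']

lemma dist_getVert_le (hconn : G.Connected) {u v : X} (q : G.Walk u v) (i : ℕ) :
    G.dist u (q.getVert i) ≤ i := by
  induction i with
  | zero => simp [SimpleGraph.Walk.getVert_zero, SimpleGraph.dist_self]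
  | succ i ih =>
    by_cases hi : i < q.length
    · have hadj := q.adj_getVert_succ hi
      have h1 : G.dist (q.getVert i) (q.getVert (i + 1)) = 1 :=
        SimpleGraph.dist_eq_one_iff_adj.mpr hadj
      have h2 := hconn.dist_triangle (u := u) (v := q.getVert i) (w := q.getVert (i + 1))
      omega
    · have e1 : q.getVert (i + 1) = v := q.getVert_of_length_le (by omega)
      have e2 : q.getVert i = v := q.getVert_of_length_le (by omega)
      rw [e1]
      rw [e2] at ih
      omega

lemma exists_dist_eq (hconn : G.Connected) (y z : X) {h : ℕ} (hle : h ≤ G.dist y z) :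
    ∃ w : X, G.dist y w = h ∧ G.dist w z = G.dist y z - h := by
  obtain ⟨q, hq⟩ := hconn.exists_walk_length_eq_dist y z
  refine ⟨q.getVert h, ?_⟩
  have h1 : G.dist y (q.getVert h) ≤ h := dist_getVert_le hconn q h
  have h2 : G.dist (q.getVert h) z ≤ G.dist y z - h := by
    have hrev : q.reverse.getVert (q.length - h) = q.getVert h := by
      rw [SimpleGraph.Walk.getVert_reverse]
      congr 1
      omega
    have h3 := dist_getVert_le hconn q.reverse (q.length - h)
    rw [hrev] at h3
    rw [SimpleGraph.dist_comm]
    omega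
  have h3 := hconn.dist_triangle (u := y) (v := q.getVert h) (w := z)
  omega

lemma exists_pair (hdrg : IsDRG G D p) {h : ℕ} (hh : h ≤ D) :
    ∃ y z : X, G.dist y z = h := by
  obtain ⟨y, z, hyz⟩ := hdrg.2.2.1
  obtain ⟨w, hw, -⟩ := exists_dist_eq hdrg.1 y z (hyz ▸ hh)
  exact ⟨y, w, hw⟩

lemma card_eq (hdrg : IsDRG G D p) (hD : 3 ≤ D) {i : ℕ} (hi : i ≤ D) (y z : X) :
    (Finset.univ.filter fun w => G.dist y w = 1 ∧ G.dist w z = i).card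
      = p (G.dist y z) 1 i :=
  hdrg.2.2.2 _ 1 i (hdrg.2.1 y z) (by omega) hi y z rfl

lemma p_eq_zero (hdrg : IsDRG G D p) (hD : 3 ≤ D) {h i : ℕ} (hh : h ≤ D) (hi : i ≤ D)
    (hfar : h + 1 < i ∨ i + 1 < h) : p h 1 i = 0 := by
  obtain ⟨y, z, hyz⟩ := exists_pair hdrg hh
  rw [← hyz, ← card_eq hdrg hD hi y z, Finset.card_eq_zero, Finset.filter_eq_empty_iff]
  rintro w -
  rintro ⟨h1, h2⟩
  have h1' : G.dist w y = 1 := by rw [SimpleGraph.dist_comm]; exact h1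
  have t1 := hdrg.1.dist_triangle (u := y) (v := w) (w := z)
  have t2 := hdrg.1.dist_triangle (u := w) (v := y) (w := z)
  omega

lemma p010 (hdrg : IsDRG G D p) (hD : 3 ≤ D) : p 0 1 0 = 0 := by
  obtain ⟨y, z, -⟩ := hdrg.2.2.1
  have hc := card_eq hdrg hD (i := 0) (by omega) y y
  rw [SimpleGraph.dist_self] at hc
  rw [← hc, Finset.card_eq_zero, Finset.filter_eq_empty_iff]
  rintro w -
  rintro ⟨h1, h2⟩
  have : w = y := (hdrg.1.dist_eq_zero_iff).mp h2
  subst this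
  rw [SimpleGraph.dist_comm] at h2
  omega

lemma p_pos (hdrg : IsDRG G D p) (hD : 3 ≤ D) {h : ℕ} (hh : h + 1 ≤ D) :
    0 < p h 1 (h + 1) ∧ 0 < p (h + 1) 1 h := by
  obtain ⟨u, z, huz⟩ := exists_pair hdrg hh
  obtain ⟨q, hq⟩ := hdrg.1.exists_walk_length_eq_dist u z
  have hlen : q.length = h + 1 := by rw [hq, huz]
  have hadj : G.Adj u (q.getVert 1) := by
    have := q.adj_getVert_succ (i := 0) (by omega)
    rwa [SimpleGraph.Walk.getVert_zero] at this
  have huy : G.dist u (q.getVert 1) = 1 := SimpleGraph.dist_eq_one_iff_adj.mpr hadj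
  have hyz : G.dist (q.getVert 1) z = h := by
    have h2 : G.dist (q.getVert 1) z ≤ h := by
      have hrev : q.reverse.getVert h = q.getVert 1 := by
        rw [SimpleGraph.Walk.getVert_reverse]
        congr 1
        omega
      have h3 := dist_getVert_le hdrg.1 q.reverse h
      rw [hrev] at h3
      rw [SimpleGraph.dist_comm]
      omega
    have h3 := hdrg.1.dist_triangle (u := u) (v := q.getVert 1) (w := z)
    omega
  constructor
  · have hc := card_eq hdrg hD (i := h + 1) hh (q.getVert 1) z
    rw [hyz] at hc
    rw [← hc, Finset.card_pos]
    refine ⟨u, Finset.mem_filter.mpr ⟨Finset.mem_univ _, ?_, huz⟩⟩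
    rw [SimpleGraph.dist_comm]
    exact huy
  · have hc := card_eq hdrg hD (i := h) (by omega) u z
    rw [huz] at hc
    rw [← hc, Finset.card_pos]
    exact ⟨q.getVert 1, Finset.mem_filter.mpr ⟨Finset.mem_univ _, huy, hyz⟩⟩

lemma sum_entry (hdrg : IsDRG G D p) (c : ℕ → ℂ) (y z : X) :
    (∑ i ∈ Finset.range (D + 1), c i • distMat G (i : ℤ)) y z = c (G.dist y z) := by
  have hd : G.dist y z ∈ Finset.range (D + 1) :=
    Finset.mem_range.mpr (by have := hdrg.2.1 y z; omega)
  rw [Matrix.sum_apply]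
  have hterm : ∀ i, (c i • distMat G (i : ℤ)) y z
      = if G.dist y z = i then c (G.dist y z) else 0 := by
    intro i
    rw [Matrix.smul_apply, distMat_apply, smul_eq_mul]
    split_ifs with hif
    · rw [hif, mul_one]
    · rw [mul_zero]
  simp_rw [hterm]
  rw [Finset.sum_ite_eq, if_pos hd]

lemma mul_sum_entry (hdrg : IsDRG G D p) (hD : 3 ≤ D) (c : ℕ → ℂ) (y z : X) :
    (distMat G 1 * ∑ i ∈ Finset.range (D + 1), c i • distMat G (i : ℤ)) y z
      = ∑ i ∈ Finset.range (D + 1), (p (G.dist y z) 1 i : ℂ) * c i := by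
  rw [Matrix.mul_apply]
  have key : ∀ w : X, distMat G 1 y w
        * (∑ i ∈ Finset.range (D + 1), c i • distMat G (i : ℤ)) w z
      = (if G.dist y w = 1 then (1 : ℂ) else 0) * c (G.dist w z) := by
    intro w
    rw [sum_entry hdrg, distMat_one_apply]
  simp_rw [key]
  rw [← Finset.sum_fiberwise_of_maps_to (g := fun w => G.dist w z)
    (t := Finset.range (D + 1)) (fun w _ => Finset.mem_range.mpr (Nat.lt_succ_of_le (hdrg.2.1 w z)))]
  refine Finset.sum_congr rfl fun i hi => ?_
  have hiD : i ≤ D := by have := Finset.mem_range.mp hi; omega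
  calc ∑ w ∈ Finset.univ.filter fun w => G.dist w z = i,
        (if G.dist y w = 1 then (1 : ℂ) else 0) * c (G.dist w z)
      = ∑ w ∈ Finset.univ.filter fun w => G.dist w z = i,
        (if G.dist y w = 1 then (1 : ℂ) else 0) * c i := by
        refine Finset.sum_congr rfl fun w hw => ?_
        rw [(Finset.mem_filter.mp hw).2]
    _ = (∑ w ∈ Finset.univ.filter fun w => G.dist w z = i,
          if G.dist y w = 1 then (1 : ℂ) else 0) * c i := by
        rw [Finset.sum_mul]
    _ = (((Finset.univ.filter fun w => G.dist w z = i).filter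
          fun w => G.dist y w = 1).card : ℂ) * c i := by
        rw [← Finset.sum_filter, Finset.sum_const, nsmul_eq_mul, mul_one]
    _ = (p (G.dist y z) 1 i : ℂ) * c i := by
        congr 2
        rw [Finset.filter_filter, ← card_eq hdrg hD hiD y z]
        congr 1
        apply Finset.filter_congr
        intro w _
        simp [and_comm]

lemma pow_repr (hdrg : IsDRG G D p) (hD : 3 ≤ D) (n : ℕ) :
    ∃ c : ℕ → ℂ,
      distMat G 1 ^ n = ∑ i ∈ Finset.range (D + 1), c i • distMat G (i : ℤ) := by
  induction n with
  | zero =>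
    refine ⟨fun i => if i = 0 then 1 else 0, ?_⟩
    ext y z
    rw [sum_entry hdrg, pow_zero, Matrix.one_apply]
    by_cases hyz : y = z
    · subst hyz
      rw [if_pos rfl, SimpleGraph.dist_self, if_pos rfl]
    · rw [if_neg hyz, if_neg (by rw [hdrg.1.dist_eq_zero_iff]; exact hyz)]
  | succ n ih =>
    obtain ⟨c, hc⟩ := ih
    refine ⟨fun h => ∑ i ∈ Finset.range (D + 1), (p h 1 i : ℂ) * c i, ?_⟩
    rw [pow_succ', hc]
    ext y z
    rw [mul_sum_entry hdrg hD, sum_entry hdrg]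

lemma repr_of_mem (hdrg : IsDRG G D p) (hD : 3 ≤ D) {Y : Matrix X X ℂ}
    (hY : Y ∈ bmAlg G) :
    ∃ c : ℕ → ℂ, Y = ∑ i ∈ Finset.range (D + 1), c i • distMat G (i : ℤ) := by
  rw [bmAlg, Algebra.adjoin_singleton_eq_range_aeval] at hY
  simp only [AlgHom.mem_range] at hY
  obtain ⟨q, rfl⟩ := hY
  induction q using Polynomial.induction_on' with
  | add f g hf hg =>
    obtain ⟨cf, hcf⟩ := hf
    obtain ⟨cg, hcg⟩ := hg
    refine ⟨cf + cg, ?_⟩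
    rw [map_add, hcf, hcg, ← Finset.sum_add_distrib]
    refine Finset.sum_congr rfl fun i _ => ?_
    rw [Pi.add_apply, add_smul]
  | monomial n a =>
    obtain ⟨c, hc⟩ := pow_repr hdrg hD n
    refine ⟨fun i => a * c i, ?_⟩
    rw [Polynomial.aeval_monomial, ← Algebra.smul_def, hc, Finset.smul_sum]
    refine Finset.sum_congr rfl fun i _ => ?_
    rw [smul_smul]

lemma distMat_eq_sum (hdrg : IsDRG G D p) {i : ℕ} (hi : i ≤ D) :
    distMat G (i : ℤ) = ∑ j ∈ Finset.range (D + 1),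
      (if j = i then (1 : ℂ) else 0) • distMat G (j : ℤ) := by
  ext y z
  rw [sum_entry hdrg, distMat_apply]

lemma mul_distMat (hdrg : IsDRG G D p) (hD : 3 ≤ D) {i : ℕ} (hi : i ≤ D) :
    distMat G 1 * distMat G (i : ℤ)
      = ∑ h ∈ Finset.range (D + 1), (p h 1 i : ℂ) • distMat G (h : ℤ) := by
  conv_lhs => rw [distMat_eq_sum hdrg hi]
  ext y z
  rw [mul_sum_entry hdrg hD, sum_entry hdrg]
  have hterm : ∀ j, (p (G.dist y z) 1 j : ℂ) * (if j = i then (1 : ℂ) else 0)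
      = if j = i then (p (G.dist y z) 1 j : ℂ) else 0 := by
    intro j
    split_ifs <;> simp
  simp_rw [hterm]
  rw [Finset.sum_ite_eq', if_pos (Finset.mem_range.mpr (by omega))]

lemma distMat_mem (hdrg : IsDRG G D p) (hD : 3 ≤ D) :
    ∀ i : ℕ, i ≤ D → distMat G (i : ℤ) ∈ bmAlg G := by
  intro i
  induction i using Nat.strong_induction_on with
  | _ i ih =>
    intro hi
    match i, ih, hi with
    | 0, _, _ =>
      have h0 : distMat G ((0 : ℕ) : ℤ) = (1 : Matrix X X ℂ) := by
        ext y z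
        rw [distMat_apply, Matrix.one_apply]
        by_cases hyz : y = z
        · subst hyz
          rw [if_pos rfl, SimpleGraph.dist_self, if_pos rfl]
        · rw [if_neg hyz, if_neg (by rw [hdrg.1.dist_eq_zero_iff]; exact hyz)]
      rw [h0]
      exact one_mem _
    | 1, _, _ =>
      have h1 : distMat G ((1 : ℕ) : ℤ) = distMat G 1 := by norm_num
      rw [h1]
      exact Algebra.subset_adjoin rfl
    | (k + 2), ih, hi =>
      have hkey := mul_distMat hdrg hD (i := k + 1) (by omega)
      have hpos : 0 < p (k + 2) 1 (k + 1) := (p_pos hdrg hD (h := k + 1) hi).2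
      have hsum := Finset.sum_erase_add (Finset.range (D + 1))
        (fun h => (p h 1 (k + 1) : ℂ) • distMat G (h : ℤ))
        (Finset.mem_range.mpr (by omega : k + 2 < D + 1))
      have heq : (p (k + 2) 1 (k + 1) : ℂ) • distMat G ((k + 2 : ℕ) : ℤ)
          = distMat G 1 * distMat G ((k + 1 : ℕ) : ℤ)
            - ∑ x ∈ (Finset.range (D + 1)).erase (k + 2),
                (p x 1 (k + 1) : ℂ) • distMat G (x : ℤ) := by
        rw [hkey, ← hsum]
        abel
      have hmem : distMat G 1 * distMat G ((k + 1 : ℕ) : ℤ)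
            - ∑ x ∈ (Finset.range (D + 1)).erase (k + 2),
                (p x 1 (k + 1) : ℂ) • distMat G (x : ℤ) ∈ bmAlg G := by
        apply sub_mem
        · exact mul_mem (Algebra.subset_adjoin rfl) (ih (k + 1) (by omega) (by omega))
        · apply sum_mem
          intro x hx
          have hx1 : x ≠ k + 2 := (Finset.mem_erase.mp hx).1
          have hx2 : x < D + 1 := Finset.mem_range.mp (Finset.mem_erase.mp hx).2
          rcases le_or_gt x (k + 1) with hle | hlt
          · exact Subalgebra.smul_mem _ (ih x (by omega) (by omega)) _
          · have hz : p x 1 (k + 1) = 0 :=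
              p_eq_zero hdrg hD (by omega) (by omega) (by omega)
            rw [hz]
            simp only [Nat.cast_zero, zero_smul]
            exact zero_mem _
      rw [← heq] at hmem
      have hne : ((p (k + 2) 1 (k + 1) : ℕ) : ℂ) ≠ 0 := Nat.cast_ne_zero.mpr hpos.ne'
      have hfin := Subalgebra.smul_mem _ hmem (((p (k + 2) 1 (k + 1) : ℕ) : ℂ))⁻¹
      rwa [smul_smul, inv_mul_cancel₀ hne, one_smul] at hfin

lemma sum_reduce (hdrg : IsDRG G D p) (hD : 3 ≤ D) {h : ℕ} (hh : h < D) (c : ℕ → ℂ) :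
    ∑ i ∈ Finset.range (D + 1), (p h 1 i : ℂ) * c i
      = (p h 1 (h - 1) : ℂ) * c (h - 1) + (p h 1 h : ℂ) * c h
        + (p h 1 (h + 1) : ℂ) * c (h + 1) := by
  rcases h with _ | k
  · rw [Finset.sum_eq_single_of_mem 1 (Finset.mem_range.mpr (by omega))]
    · simp [p010 hdrg hD]
    · intro b hb hne
      have hbD : b ≤ D := by have := Finset.mem_range.mp hb; omega
      rcases Nat.eq_zero_or_pos b with rfl | hbpos
      · rw [p010 hdrg hD]
        simp
      · rw [p_eq_zero hdrg hD (by omega) hbD (Or.inl (by omega))]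
        simp
  · have hsub : ({k, k + 1, k + 2} : Finset ℕ) ⊆ Finset.range (D + 1) := by
      intro x hx
      simp only [Finset.mem_insert, Finset.mem_singleton] at hx
      rw [Finset.mem_range]
      omega
    rw [← Finset.sum_subset hsub (by
      intro x hx hnx
      simp only [Finset.mem_insert, Finset.mem_singleton, not_or] at hnx
      have hxD : x ≤ D := by have := Finset.mem_range.mp hx; omega
      rw [p_eq_zero hdrg hD (by omega) hxD (by omega)]
      simp)]
    rw [Finset.sum_insert (by simp only [Finset.mem_insert, Finset.mem_singleton]; omega),
      Finset.sum_insert (by simp only [Finset.mem_singleton]; omega),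
      Finset.sum_singleton]
    have : k + 1 - 1 = k := by omega
    rw [this]
    ring

def recSeq (p : ℕ → ℕ → ℕ → ℕ) (θ : ℂ) : ℕ → ℂ
  | 0 => 1
  | 1 => θ / (p 0 1 1 : ℂ)
  | (h + 2) => (θ * recSeq p θ (h + 1) - (p (h + 1) 1 (h + 1) : ℂ) * recSeq p θ (h + 1)
      - (p (h + 1) 1 h : ℂ) * recSeq p θ h) / (p (h + 1) 1 (h + 2) : ℂ)

lemma recSeq_spec (hdrg : IsDRG G D p) (hD : 3 ≤ D) (θ : ℂ) {h : ℕ} (hh : h < D) :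
    (p h 1 (h + 1) : ℂ) * recSeq p θ (h + 1)
      = θ * recSeq p θ h - (p h 1 h : ℂ) * recSeq p θ h
        - (p h 1 (h - 1) : ℂ) * recSeq p θ (h - 1) := by
  rcases h with _ | k
  · have hne : ((p 0 1 1 : ℕ) : ℂ) ≠ 0 :=
      Nat.cast_ne_zero.mpr (p_pos hdrg hD (by omega : 0 + 1 ≤ D)).1.ne'
    have h0 : ((p 0 1 0 : ℕ) : ℂ) = 0 := by rw [p010 hdrg hD]; norm_num
    show (p 0 1 1 : ℂ) * recSeq p θ 1 = θ * recSeq p θ 0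
      - (p 0 1 0 : ℂ) * recSeq p θ 0 - (p 0 1 0 : ℂ) * recSeq p θ 0
    rw [h0]
    show (p 0 1 1 : ℂ) * (θ / (p 0 1 1 : ℂ)) = θ * 1 - 0 * 1 - 0 * 1
    field_simp
    ring
  · have hne : ((p (k + 1) 1 (k + 2) : ℕ) : ℂ) ≠ 0 :=
      Nat.cast_ne_zero.mpr (p_pos hdrg hD (by omega : (k + 1) + 1 ≤ D)).1.ne'
    have hk : k + 1 - 1 = k := by omega
    rw [hk]
    show (p (k + 1) 1 (k + 2) : ℂ)
        * ((θ * recSeq p θ (k + 1) - (p (k + 1) 1 (k + 1) : ℂ) * recSeq p θ (k + 1)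
          - (p (k + 1) 1 k : ℂ) * recSeq p θ k) / (p (k + 1) 1 (k + 2) : ℂ)) = _
    rw [mul_div_cancel₀ _ hne]

lemma lhs_entry (hdrg : IsDRG G D p) (hD : 3 ≤ D) (θ : ℂ) (c : ℕ → ℂ) (y z : X) :
    ((distMat G 1 - θ • 1) * ∑ i ∈ Finset.range (D + 1), c i • distMat G (i : ℤ)) y z
      = (∑ i ∈ Finset.range (D + 1), (p (G.dist y z) 1 i : ℂ) * c i)
        - θ * c (G.dist y z) := by
  rw [Matrix.sub_mul, Matrix.sub_apply, mul_sum_entry hdrg hD, Matrix.smul_mul, one_mul,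
    Matrix.smul_apply, sum_entry hdrg, smul_eq_mul]

lemma key_zero (hdrg : IsDRG G D p) (hD : 3 ≤ D) (θ : ℂ) (x₀ : X) {Y : Matrix X X ℂ}
    (h1 : Y ∈ bmAlg G)
    (h2 : ∃ t : ℂ, (distMat G 1 - θ • 1) * Y = t • distMat G (D : ℤ))
    (h0 : Y x₀ x₀ = 0) : Y = 0 := by
  obtain ⟨c, rfl⟩ := repr_of_mem hdrg hD h1
  obtain ⟨t, ht⟩ := h2
  have c0 : c 0 = 0 := by
    have hs := sum_entry hdrg c x₀ x₀
    rw [SimpleGraph.dist_self] at hs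
    rw [hs] at h0
    exact h0
  have hent : ∀ y z : X,
      (∑ i ∈ Finset.range (D + 1), (p (G.dist y z) 1 i : ℂ) * c i)
          - θ * c (G.dist y z)
        = t * (if G.dist y z = D then 1 else 0) := by
    intro y z
    have hyz := congrFun (congrFun ht y) z
    rw [lhs_entry hdrg hD, Matrix.smul_apply, distMat_apply, smul_eq_mul] at hyz
    exact hyz
  have hzero : ∀ h : ℕ, h ≤ D → c h = 0 := by
    intro h
    induction h using Nat.strong_induction_on with
    | _ h ih =>
      intro hhD
      match h, ih, hhD with
      | 0, _, _ => exact c0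
      | (k + 1), ih, hhD =>
        obtain ⟨y, z, hyz⟩ := exists_pair hdrg (show k ≤ D by omega)
        have he := hent y z
        rw [hyz, if_neg (by omega : ¬ k = D),
          sum_reduce hdrg hD (show k < D by omega)] at he
        have hk : c k = 0 := ih k (by omega) (by omega)
        have hk1 : c (k - 1) = 0 := ih (k - 1) (by omega) (by omega)
        rw [hk, hk1] at he
        simp only [mul_zero, add_zero, zero_add, sub_zero] at he
        have hpos := (p_pos hdrg hD (show k + 1 ≤ D by omega)).1
        have hne : ((p k 1 (k + 1) : ℕ) : ℂ) ≠ 0 := Nat.cast_ne_zero.mpr hpos.ne'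
        rcases mul_eq_zero.mp he with h' | h'
        · exact absurd h' hne
        · exact h'
  ext y z
  rw [sum_entry hdrg, hzero _ (hdrg.2.1 y z), Matrix.zero_apply]

lemma mem_pseudo_iff (G : SimpleGraph X) (D : ℕ) (θ : ℂ) (Y : Matrix X X ℂ) :
    Y ∈ pseudoSpace G D θ ↔ Y ∈ bmAlg G ∧
      ∃ t : ℂ, (distMat G 1 - θ • 1) * Y = t • distMat G (D : ℤ) := by
  rw [pseudoSpace, Submodule.mem_inf, Submodule.mem_comap, LinearMap.mulLeft_apply,
    Submodule.mem_span_singleton, Subalgebra.mem_toSubmodule]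
  constructor
  · rintro ⟨hm, a, ha⟩
    exact ⟨hm, a, ha.symm⟩
  · rintro ⟨hm, a, ha⟩
    exact ⟨hm, a, ha.symm⟩

end Stmt10Aux

/-- For every `θ ∈ ℂ` the subspace `M(θ)` has dimension 1; moreover
`M(∞) = ℂ A_D` has dimension 1. -/
theorem stmt10 (G : SimpleGraph X) (D : ℕ) (p : ℕ → ℕ → ℕ → ℕ)
    (hdrg : IsDRG G D p) (hD : 3 ≤ D) :
    (∀ θ : ℂ, Module.finrank ℂ (pseudoSpace G D θ) = 1) ∧
      Module.finrank ℂ (Submodule.span ℂ {distMat G (D : ℤ)}) = 1 := by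
  obtain ⟨y₀, z₀, hy₀z₀⟩ := hdrg.2.2.1
  constructor
  · intro θ
    set c := Stmt10Aux.recSeq p θ with hcdef
    set Yθ := ∑ i ∈ Finset.range (D + 1), c i • distMat G (i : ℤ) with hYdef
    have hmem1 : Yθ ∈ bmAlg G := by
      apply sum_mem
      intro i hi
      exact Subalgebra.smul_mem _
        (Stmt10Aux.distMat_mem hdrg hD i (by have := Finset.mem_range.mp hi; omega)) _
    set e := (∑ i ∈ Finset.range (D + 1), (p D 1 i : ℂ) * c i) - θ * c D with hedef
    have hmul : (distMat G 1 - θ • 1) * Yθ = e • distMat G (D : ℤ) := by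
      ext y z
      rw [hYdef, Stmt10Aux.lhs_entry hdrg hD θ c y z, Matrix.smul_apply,
        Stmt10Aux.distMat_apply, smul_eq_mul]
      by_cases hcase : G.dist y z = D
      · rw [hcase, if_pos rfl, mul_one, hedef]
      · rw [if_neg hcase, mul_zero]
        have hlt : G.dist y z < D := lt_of_le_of_ne (hdrg.2.1 y z) hcase
        rw [Stmt10Aux.sum_reduce hdrg hD hlt]
        have hspec := Stmt10Aux.recSeq_spec hdrg hD θ hlt
        rw [← hcdef] at hspec
        linear_combination hspec
    have hYmem : Yθ ∈ pseudoSpace G D θ :=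
      (Stmt10Aux.mem_pseudo_iff G D θ Yθ).mpr ⟨hmem1, e, hmul⟩
    have hY00 : Yθ y₀ y₀ = 1 := by
      rw [hYdef, Stmt10Aux.sum_entry hdrg, SimpleGraph.dist_self]
      rfl
    have hle : Module.finrank ℂ (pseudoSpace G D θ) ≤ 1 := by
      let f : ↥(pseudoSpace G D θ) →ₗ[ℂ] ℂ :=
        { toFun := fun Y => (Y : Matrix X X ℂ) y₀ y₀
          map_add' := fun a b => rfl
          map_smul' := fun m a => rfl }
      have hinj : Function.Injective f := by
        rw [← LinearMap.ker_eq_bot, LinearMap.ker_eq_bot']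
        intro m hm
        obtain ⟨hm1, hm2⟩ := (Stmt10Aux.mem_pseudo_iff G D θ m.1).mp m.2
        exact Subtype.ext (Stmt10Aux.key_zero hdrg hD θ y₀ hm1 hm2 hm)
      have hfr := LinearMap.finrank_le_finrank_of_injective hinj
      simpa using hfr
    have hne_bot : pseudoSpace G D θ ≠ ⊥ := by
      intro hbot
      rw [hbot, Submodule.mem_bot] at hYmem
      rw [hYmem, Matrix.zero_apply] at hY00
      exact zero_ne_one hY00
    have hpos : 0 < Module.finrank ℂ (pseudoSpace G D θ) := by
      rcases Nat.eq_zero_or_pos (Module.finrank ℂ (pseudoSpace G D θ)) with h0 | h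
      · exact absurd (Submodule.finrank_eq_zero.mp h0) hne_bot
      · exact h
    omega
  · have hAD : distMat G (D : ℤ) ≠ 0 := by
      intro h0
      have h1 : distMat G (D : ℤ) y₀ z₀ = 1 := by
        rw [Stmt10Aux.distMat_apply, if_pos hy₀z₀]
      rw [h0, Matrix.zero_apply] at h1
      exact zero_ne_one h1
    exact finrank_span_singleton hAD
end
end

section
/- If θ and θ' are distinct complex numbers, then M(θ) ∩ M(θ') = 0; moreover, for every θ ∈ ℂ, M(θ) ∩ M(∞) = 0, where M(∞) = ℂA_D. -/
open Matrix Polynomial BigOperators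

noncomputable section

variable {X : Type*} [Fintype X] [DecidableEq X]

/-- If `θ ≠ θ'` are complex numbers then `M(θ) ∩ M(θ') = 0`; moreover
for every `θ ∈ ℂ`, `M(θ) ∩ M(∞) = 0`, where `M(∞) = ℂ A_D`. -/
theorem stmt11 (G : SimpleGraph X) (D : ℕ) (p : ℕ → ℕ → ℕ → ℕ)
    (hdrg : IsDRG G D p) (hD : 3 ≤ D) :
    (∀ θ θ' : ℂ, θ ≠ θ' → pseudoSpace G D θ ⊓ pseudoSpace G D θ' = ⊥) ∧
      ∀ θ : ℂ, pseudoSpace G D θ ⊓ Submodule.span ℂ {distMat G (D : ℤ)} = ⊥ := by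
  classical
  obtain ⟨hconn, hle, ⟨y0, z0, hdist0⟩, hp⟩ := hdrg
  -- find a neighbor w0 of z0 with dist w0 y0 = D - 1
  have hdz : G.dist z0 y0 = D := by rwa [SimpleGraph.dist_comm]
  have hdz0 : G.dist z0 y0 ≠ 0 := by omega
  obtain ⟨q, hq⟩ := (hconn.preconnected z0 y0).exists_walk_length_eq_dist
  have hqlen : q.length = D := by rw [hq, hdz]
  have hql : q.length ≠ 0 := by omega
  obtain ⟨w0, hadj, q', hq'⟩ : ∃ w0, G.Adj z0 w0 ∧ ∃ q' : G.Walk w0 y0, q'.length = D - 1 := by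
    cases q with
    | nil => simp at hqlen; omega
    | cons h t =>
      exact ⟨_, h, t, by simp at hqlen; omega⟩
  have hdw0le : G.dist w0 y0 ≤ D - 1 := hq' ▸ SimpleGraph.dist_le q'
  have hdzw : G.dist z0 w0 = 1 := SimpleGraph.dist_eq_one_iff_adj.mpr hadj
  have hdw0ge : D - 1 ≤ G.dist w0 y0 := by
    have htri := SimpleGraph.Connected.dist_triangle hconn (u := z0) (v := w0) (w := y0)
    omega
  have hdw0 : G.dist w0 y0 = D - 1 := le_antisymm hdw0le hdw0ge
  have hdw0z0 : G.dist w0 z0 = 1 := by rwa [SimpleGraph.dist_comm]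
  -- the key sum S
  set S : ℂ := ∑ w, (if (G.dist w0 w : ℤ) = 1 then (1:ℂ) else 0) *
      (if (G.dist w y0 : ℤ) = (D : ℤ) then (1:ℂ) else 0) with hSdef
  have hSmul : (distMat G 1 * distMat G (D : ℤ)) w0 y0 = S := by
    simp [Matrix.mul_apply, distMat, hSdef]
  have hScard : S = ((Finset.univ.filter fun w =>
      (G.dist w0 w : ℤ) = 1 ∧ (G.dist w y0 : ℤ) = (D : ℤ)).card : ℂ) := by
    rw [Finset.card_filter, Nat.cast_sum, hSdef]
    apply Finset.sum_congr rfl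
    intro w _
    by_cases h1 : (G.dist w0 w : ℤ) = 1 <;>
      by_cases h2 : (G.dist w y0 : ℤ) = (D : ℤ) <;> simp [h1, h2]
  have hSne : S ≠ 0 := by
    rw [hScard]
    have hz0mem : z0 ∈ Finset.univ.filter fun w =>
        (G.dist w0 w : ℤ) = 1 ∧ (G.dist w y0 : ℤ) = (D : ℤ) := by
      simp only [Finset.mem_filter, Finset.mem_univ, true_and]
      exact ⟨by exact_mod_cast hdw0z0, by exact_mod_cast hdz⟩
    have hcard := Finset.card_pos.mpr ⟨z0, hz0mem⟩
    exact_mod_cast Nat.cast_pos.mpr hcard |>.ne' 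
  have hADw0y0 : distMat G (D : ℤ) w0 y0 = 0 := by
    simp only [distMat, Matrix.of_apply, hdw0]
    rw [if_neg]
    omega
  -- second claim
  have key : ∀ θ : ℂ, pseudoSpace G D θ ⊓ Submodule.span ℂ {distMat G (D : ℤ)} = ⊥ := by
    intro θ
    rw [eq_bot_iff]
    intro Y hY
    obtain ⟨hY1, hY2⟩ := Submodule.mem_inf.mp hY
    obtain ⟨γ, hγ⟩ := Submodule.mem_span_singleton.mp hY2
    obtain ⟨-, hY1'⟩ := Submodule.mem_inf.mp hY1
    have hY1'' : (distMat G 1 - θ • 1) * Y ∈ Submodule.span ℂ {distMat G (D : ℤ)} := hY1'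
    obtain ⟨δ, hδ⟩ := Submodule.mem_span_singleton.mp hY1''
    have heq : (distMat G 1 - θ • 1) * (γ • distMat G (D : ℤ)) = δ • distMat G (D : ℤ) := by
      rw [hγ, hδ]
    have heq2 := congrArg (fun M : Matrix X X ℂ => M w0 y0) heq
    simp only [Matrix.sub_mul, Matrix.mul_smul, Matrix.smul_mul, Matrix.one_mul,
      Matrix.sub_apply, Matrix.smul_apply, smul_eq_mul, smul_smul] at heq2
    rw [hSmul, hADw0y0] at heq2
    have hγ0 : γ = 0 := by
      have : γ * S = 0 := by linear_combination heq2
      exact (mul_eq_zero.mp this).resolve_right hSne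
    rw [Submodule.mem_bot, ← hγ, hγ0, zero_smul]
  refine ⟨?_, key⟩
  intro θ θ' hθθ'
  rw [eq_bot_iff]
  intro Y hY
  obtain ⟨hYθ, hYθ'⟩ := Submodule.mem_inf.mp hY
  obtain ⟨-, h1⟩ := Submodule.mem_inf.mp hYθ
  obtain ⟨-, h2⟩ := Submodule.mem_inf.mp hYθ'
  have h1' : (distMat G 1 - θ • 1) * Y ∈ Submodule.span ℂ {distMat G (D : ℤ)} := h1
  have h2' : (distMat G 1 - θ' • 1) * Y ∈ Submodule.span ℂ {distMat G (D : ℤ)} := h2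
  obtain ⟨α, hα⟩ := Submodule.mem_span_singleton.mp h1'
  obtain ⟨β, hβ⟩ := Submodule.mem_span_singleton.mp h2'
  have hsub : (θ' - θ) • Y = (α - β) • distMat G (D : ℤ) := by
    have : (distMat G 1 - θ • 1) * Y - (distMat G 1 - θ' • 1) * Y
        = (θ' - θ) • Y := by
      rw [← Matrix.sub_mul]
      have h3 : (distMat G 1 - θ • 1) - (distMat G 1 - θ' • 1) = (θ' - θ) • (1 : Matrix X X ℂ) := by
        rw [sub_smul]; abel
      rw [h3, Matrix.smul_mul, Matrix.one_mul]
    rw [← this, ← hα, ← hβ, ← sub_smul]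
  have hYspan : Y ∈ Submodule.span ℂ {distMat G (D : ℤ)} := by
    have hne : (θ' - θ) ≠ 0 := sub_ne_zero.mpr (Ne.symm hθθ')
    refine Submodule.mem_span_singleton.mpr ⟨(θ' - θ)⁻¹ * (α - β), ?_⟩
    have := congrArg (fun M : Matrix X X ℂ => (θ' - θ)⁻¹ • M) hsub
    simpa [smul_smul, inv_mul_cancel₀ hne, mul_assoc] using this.symm
  have : Y ∈ pseudoSpace G D θ ⊓ Submodule.span ℂ {distMat G (D : ℤ)} :=
    Submodule.mem_inf.mpr ⟨hYθ, hYspan⟩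
  rw [key θ] at this
  exact this
end
end

section
/- Let θ be an eigenvalue of the adjacency matrix A, and let E be a nonzero element of M satisfying AE = θE (for instance, the primitive idempotent of M associated with θ). Then M(θ) = ℂE. -/
open Matrix Polynomial BigOperators

noncomputable section

variable {X : Type*} [Fintype X] [DecidableEq X]

namespace Stmt12Aux

set_option linter.unusedSectionVars false

open scoped ComplexOrder

lemma pow_mul_eigen (A B : Matrix X X ℂ) (θ : ℂ) (hB : A * B = θ • B) :
    ∀ n : ℕ, A ^ n * B = θ ^ n • B
  | 0 => by simp
  | n + 1 => by
    rw [pow_succ, mul_assoc, hB, mul_smul_comm, pow_mul_eigen A B θ hB n,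
      smul_smul, pow_succ, mul_comm]

lemma aeval_mul_eigen (A B : Matrix X X ℂ) (θ : ℂ) (hB : A * B = θ • B) (f : ℂ[X]) :
    aeval A f * B = f.eval θ • B := by
  induction f using Polynomial.induction_on with
  | C a => simp [Algebra.algebraMap_eq_smul_one, smul_mul_assoc]
  | add f g hf hg => rw [map_add, add_mul, hf, hg, eval_add, add_smul]
  | monomial n a _ =>
    rw [_root_.map_mul, map_pow, aeval_C, aeval_X, eval_mul, eval_pow, eval_C, eval_X,
      Algebra.algebraMap_eq_smul_one, smul_mul_assoc, smul_mul_assoc, one_mul,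
      pow_mul_eigen A B θ hB, smul_smul]

lemma pow_mulVec_eigen (A : Matrix X X ℂ) (v : X → ℂ) (θ : ℂ) (hv : A *ᵥ v = θ • v) :
    ∀ n : ℕ, A ^ n *ᵥ v = θ ^ n • v
  | 0 => by simp
  | n + 1 => by
    rw [pow_succ, ← Matrix.mulVec_mulVec, hv, Matrix.mulVec_smul,
      pow_mulVec_eigen A v θ hv n, smul_smul, pow_succ, mul_comm]

lemma aeval_mulVec_eigen (A : Matrix X X ℂ) (v : X → ℂ) (θ : ℂ) (hv : A *ᵥ v = θ • v)
    (f : ℂ[X]) : aeval A f *ᵥ v = f.eval θ • v := by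
  induction f using Polynomial.induction_on with
  | C a => simp [Algebra.algebraMap_eq_smul_one, Matrix.smul_mulVec]
  | add f g hf hg => rw [map_add, Matrix.add_mulVec, hf, hg, eval_add, add_smul]
  | monomial n a _ =>
    rw [_root_.map_mul, map_pow, aeval_C, aeval_X, eval_mul, eval_pow, eval_C, eval_X,
      Algebra.algebraMap_eq_smul_one, smul_mul_assoc, one_mul, Matrix.smul_mulVec,
      pow_mulVec_eigen A v θ hv, smul_smul]

lemma aeval_comm (A : Matrix X X ℂ) (f g : ℂ[X]) :
    aeval A f * aeval A g = aeval A g * aeval A f := by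
  rw [← _root_.map_mul, ← _root_.map_mul, mul_comm]

lemma conjT_mulVec_eq_zero (C : Matrix X X ℂ) (hn : C * Cᴴ = Cᴴ * C) (v : X → ℂ)
    (h : C *ᵥ v = 0) : Cᴴ *ᵥ v = 0 := by
  have key : star (Cᴴ *ᵥ v) ⬝ᵥ (Cᴴ *ᵥ v) = 0 := by
    rw [Matrix.star_mulVec, Matrix.conjTranspose_conjTranspose,
      Matrix.dotProduct_mulVec, Matrix.vecMul_vecMul, hn, ← Matrix.vecMul_vecMul,
      ← Matrix.dotProduct_mulVec, ← Matrix.star_mulVec, h]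
    simp
  exact dotProduct_star_self_eq_zero.mp key

lemma mulVec_eq_zero_of_sq (C : Matrix X X ℂ) (hn : C * Cᴴ = Cᴴ * C) (v : X → ℂ)
    (h : C *ᵥ (C *ᵥ v) = 0) : C *ᵥ v = 0 := by
  have h1 : Cᴴ *ᵥ (C *ᵥ v) = 0 := conjT_mulVec_eq_zero C hn _ h
  have key : star (C *ᵥ v) ⬝ᵥ (C *ᵥ v) = 0 := by
    have h2 : star (C *ᵥ v) ᵥ* C = 0 := by
      have := congrArg star h1
      rw [Matrix.star_mulVec, Matrix.conjTranspose_conjTranspose] at this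
      simpa using this
    rw [Matrix.dotProduct_mulVec, h2, zero_dotProduct]
  exact dotProduct_star_self_eq_zero.mp key

lemma aeval_eq_zero_of_root (A : Matrix X X ℂ) (hA : A.IsHermitian) (θ : ℂ) (g : ℂ[X])
    (hroot : g.eval θ = 0) (heig : A * aeval A g = θ • aeval A g) : aeval A g = 0 := by
  obtain ⟨h, rfl⟩ : (Polynomial.X - C θ) ∣ g := dvd_iff_isRoot.mpr hroot
  set Cm : Matrix X X ℂ := A - θ • 1 with hCmdef
  have hCm : aeval A (Polynomial.X - C θ) = Cm := by
    rw [map_sub, aeval_X, aeval_C, Algebra.algebraMap_eq_smul_one]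
  have hB : aeval A ((Polynomial.X - C θ) * h) = Cm * aeval A h := by rw [_root_.map_mul, hCm]
  have hCmB : Cm * (Cm * aeval A h) = 0 := by
    rw [← hB, hCmdef, sub_mul, smul_mul_assoc, one_mul, heig, sub_self]
  have hn : Cm * Cmᴴ = Cmᴴ * Cm := by
    have hH : Cmᴴ = aeval A (Polynomial.X - C (star θ)) := by
      rw [hCmdef, Matrix.conjTranspose_sub, hA.eq, Matrix.conjTranspose_smul,
        Matrix.conjTranspose_one, map_sub, aeval_X, aeval_C, Algebra.algebraMap_eq_smul_one]
    rw [hH, ← hCm, aeval_comm]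
  have hzero : ∀ z : X, (Cm * aeval A h) *ᵥ Pi.single z 1 = 0 := by
    intro z
    rw [← Matrix.mulVec_mulVec]
    apply mulVec_eq_zero_of_sq Cm hn
    rw [Matrix.mulVec_mulVec, Matrix.mulVec_mulVec, mul_assoc, hCmB, Matrix.zero_mulVec]
  rw [hB]
  ext y z
  simpa using congrFun (hzero z) y


lemma distMat_zero_eq_one (G : SimpleGraph X) (hc : G.Connected) : distMat G 0 = 1 := by
  ext y z
  simp only [distMat, Matrix.of_apply, Matrix.one_apply, Nat.cast_eq_zero]
  by_cases h : y = z
  · simp [h, SimpleGraph.dist_self]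
  · simp [h, (hc.dist_eq_zero_iff).not.mpr h]

lemma distMat_of_gt (G : SimpleGraph X) (D : ℕ) (hle : ∀ y z : X, G.dist y z ≤ D)
    (i : ℕ) (hi : D < i) : distMat G (i : ℤ) = 0 := by
  ext y z
  simp only [distMat, Matrix.of_apply, Matrix.zero_apply, ite_eq_right_iff, Nat.cast_inj]
  intro h
  have := hle y z
  omega

lemma mul_distMat_apply (G : SimpleGraph X) (i : ℕ) (y z : X) :
    (distMat G 1 * distMat G (i : ℤ)) y z =
      ((Finset.univ.filter fun w => G.dist y w = 1 ∧ G.dist w z = i).card : ℂ) := by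
  rw [Matrix.mul_apply]
  have key : ∀ w : X, (distMat G 1) y w * (distMat G (i:ℤ)) w z =
      if (G.dist y w = 1 ∧ G.dist w z = i) then (1:ℂ) else 0 := by
    intro w
    simp only [distMat, Matrix.of_apply, Nat.cast_eq_one, Nat.cast_inj]
    by_cases h1 : G.dist y w = 1 <;> by_cases h2 : G.dist w z = i <;> simp [h1, h2]
  simp_rw [key]
  rw [Finset.sum_boole]

lemma exists_adj_dist (G : SimpleGraph X) (hc : G.Connected) {y z : X} {i : ℕ}
    (h : G.dist y z = i + 1) : ∃ w, G.dist y w = 1 ∧ G.dist w z = i := by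
  obtain ⟨P, hP⟩ := hc.exists_walk_length_eq_dist y z
  rw [h] at hP
  cases P with
  | nil => simp at hP
  | @cons _ b _ a q =>
    have hyb : G.dist y b = 1 := SimpleGraph.dist_eq_one_iff_adj.mpr a
    refine ⟨b, hyb, ?_⟩
    have h1 : G.dist b z ≤ i := by
      have := SimpleGraph.dist_le q
      simp only [SimpleGraph.Walk.length_cons] at hP
      omega
    have h2 : i + 1 ≤ 1 + G.dist b z := by
      calc i + 1 = G.dist y z := h.symm
        _ ≤ G.dist y b + G.dist b z := hc.dist_triangle
        _ = 1 + G.dist b z := by rw [hyb]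
    omega

lemma exists_pair_dist (G : SimpleGraph X) (hc : G.Connected) (D : ℕ)
    (hex : ∃ y z : X, G.dist y z = D) : ∀ i, i ≤ D → ∃ y z : X, G.dist y z = i := by
  have aux : ∀ k, k ≤ D → ∃ y z : X, G.dist y z = D - k := by
    intro k
    induction k with
    | zero => intro _; simpa using hex
    | succ k ih =>
      intro hk
      obtain ⟨y, z, hyz⟩ := ih (by omega)
      have : G.dist y z = (D - (k+1)) + 1 := by omega
      obtain ⟨w, _, hw2⟩ := exists_adj_dist G hc this
      exact ⟨w, z, hw2⟩
  intro i hi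
  obtain ⟨y, z, hyz⟩ := aux (D - i) (by omega)
  have : D - (D - i) = i := by omega
  rw [this] at hyz
  exact ⟨y, z, hyz⟩

lemma c_pos (G : SimpleGraph X) (D : ℕ) (p : ℕ → ℕ → ℕ → ℕ) (hdrg : IsDRG G D p) :
    ∀ i : ℕ, i + 1 ≤ D → 0 < p (i+1) 1 i := by
  obtain ⟨hc, hle, hex, hp⟩ := hdrg
  intro i hi
  obtain ⟨y, z, hyz⟩ := exists_pair_dist G hc D hex (i+1) hi
  obtain ⟨w, hw1, hw2⟩ := exists_adj_dist G hc hyz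
  have hcard := hp (i+1) 1 i hi (by omega) (by omega) y z hyz
  rw [← hcard]
  exact Finset.card_pos.mpr ⟨w, by simp [hw1, hw2]⟩

lemma b_pos (G : SimpleGraph X) (D : ℕ) (p : ℕ → ℕ → ℕ → ℕ) (hdrg : IsDRG G D p) :
    ∀ i : ℕ, i + 1 ≤ D → 0 < p i 1 (i+1) := by
  obtain ⟨hc, hle, hex, hp⟩ := hdrg
  intro i hi
  obtain ⟨y, z, hyz⟩ := exists_pair_dist G hc D hex (i+1) hi
  obtain ⟨w, hw1, hw2⟩ := exists_adj_dist G hc hyz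
  have hcard := hp i 1 (i+1) (by omega) (by omega) hi w z hw2
  rw [← hcard]
  refine Finset.card_pos.mpr ⟨y, ?_⟩
  simp only [Finset.mem_filter, Finset.mem_univ, true_and]
  exact ⟨by rw [SimpleGraph.dist_comm]; exact hw1, hyz⟩

lemma recurrence (G : SimpleGraph X) (D : ℕ) (p : ℕ → ℕ → ℕ → ℕ) (hdrg : IsDRG G D p)
    (i : ℕ) (hi : i + 1 ≤ D) :
    distMat G 1 * distMat G ((i+1 : ℕ) : ℤ) =
      (p i 1 (i+1) : ℂ) • distMat G (i : ℤ)
        + (p (i+1) 1 (i+1) : ℂ) • distMat G ((i+1 : ℕ) : ℤ)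
        + (p (i+2) 1 (i+1) : ℂ) • distMat G ((i+2 : ℕ) : ℤ) := by
  obtain ⟨hc, hle, hex, hp⟩ := hdrg
  ext y z
  rw [mul_distMat_apply]
  have hd := hle y z
  simp only [Matrix.add_apply, Matrix.smul_apply, distMat, Matrix.of_apply,
    Nat.cast_inj, smul_eq_mul, mul_ite, mul_one, mul_zero]
  by_cases e1 : G.dist y z = i
  · rw [← hp i 1 (i+1) (by omega) (by omega) hi y z e1]
    simp [e1]
  · by_cases e2 : G.dist y z = i + 1
    · rw [← hp (i+1) 1 (i+1) hi (by omega) hi y z e2]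
      simp [e2]
    · by_cases e3 : G.dist y z = i + 2
      · have hi2 : i + 2 ≤ D := by omega
        rw [← hp (i+2) 1 (i+1) hi2 (by omega) hi y z e3]
        simp [e3]
      · have hempty : (Finset.univ.filter
            fun w => G.dist y w = 1 ∧ G.dist w z = i + 1) = ∅ := by
          apply Finset.filter_eq_empty_iff.mpr
          rintro w - ⟨hw1, hw2⟩
          have t1 : G.dist y z ≤ G.dist y w + G.dist w z := hc.dist_triangle
          have t2 : G.dist w z ≤ G.dist w y + G.dist y z := hc.dist_triangle
          have hwy : G.dist w y = 1 := by rw [SimpleGraph.dist_comm]; exact hw1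
          omega
        rw [hempty]
        simp [e1, e2, e3]

lemma recurrence_top (G : SimpleGraph X) (D : ℕ) (p : ℕ → ℕ → ℕ → ℕ) (hdrg : IsDRG G D p)
    (e : ℕ) (he : e + 1 = D) :
    distMat G 1 * distMat G ((e+1 : ℕ) : ℤ) =
      (p e 1 (e+1) : ℂ) • distMat G (e : ℤ)
        + (p (e+1) 1 (e+1) : ℂ) • distMat G ((e+1 : ℕ) : ℤ) := by
  rw [recurrence G D p hdrg e (by omega),
    distMat_of_gt G D hdrg.2.1 (e+2) (by omega), smul_zero, add_zero]


def vp (p : ℕ → ℕ → ℕ → ℕ) : ℕ → ℂ[X]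
  | 0 => 1
  | 1 => Polynomial.X
  | (i+2) => ((p (i+2) 1 (i+1) : ℂ))⁻¹ •
      ((Polynomial.X - C (p (i+1) 1 (i+1) : ℂ)) * vp p (i+1)
        - C (p i 1 (i+1) : ℂ) * vp p i)

lemma c_ne_zero (G : SimpleGraph X) (D : ℕ) (p : ℕ → ℕ → ℕ → ℕ) (hdrg : IsDRG G D p)
    {i : ℕ} (hi : i + 1 ≤ D) : (p (i+1) 1 i : ℂ) ≠ 0 := by
  exact_mod_cast (Nat.cast_ne_zero (R := ℂ)).mpr (c_pos G D p hdrg i hi).ne'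

lemma b_ne_zero (G : SimpleGraph X) (D : ℕ) (p : ℕ → ℕ → ℕ → ℕ) (hdrg : IsDRG G D p)
    {i : ℕ} (hi : i + 1 ≤ D) : (p i 1 (i+1) : ℂ) ≠ 0 := by
  exact_mod_cast (Nat.cast_ne_zero (R := ℂ)).mpr (b_pos G D p hdrg i hi).ne'

lemma aeval_vp (G : SimpleGraph X) (D : ℕ) (p : ℕ → ℕ → ℕ → ℕ) (hdrg : IsDRG G D p) :
    ∀ i : ℕ, i ≤ D → aeval (distMat G 1) (vp p i) = distMat G (i : ℤ)
  | 0, _ => by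
    simp only [vp, _root_.map_one]
    rw [show ((0:ℕ):ℤ) = (0:ℤ) by norm_num, distMat_zero_eq_one G hdrg.1]
  | 1, _ => by
    simp only [vp, aeval_X]
    norm_num
  | (i+2), hle2 => by
    have h1 := aeval_vp G D p hdrg (i+1) (by omega)
    have h0 := aeval_vp G D p hdrg i (by omega)
    have hrec := recurrence G D p hdrg i (by omega)
    have hc : (p (i+2) 1 (i+1) : ℂ) ≠ 0 := c_ne_zero G D p hdrg (by omega)
    simp only [vp, _root_.map_smul, map_sub, _root_.map_mul, aeval_X, aeval_C]
    rw [h1, h0, Algebra.algebraMap_eq_smul_one, Algebra.algebraMap_eq_smul_one]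
    have expand : (distMat G 1 - (p (i+1) 1 (i+1) : ℂ) • 1) * distMat G ((i+1:ℕ):ℤ)
          - ((p i 1 (i+1) : ℂ) • (1 : Matrix X X ℂ)) * distMat G (i:ℤ)
        = (p (i+2) 1 (i+1) : ℂ) • distMat G ((i+2:ℕ):ℤ) := by
      rw [sub_mul, smul_mul_assoc, smul_mul_assoc, one_mul, one_mul, hrec]
      abel
    rw [expand, smul_smul, inv_mul_cancel₀ hc, one_smul]

lemma aeval_mpoly (G : SimpleGraph X) (D : ℕ) (p : ℕ → ℕ → ℕ → ℕ) (hdrg : IsDRG G D p)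
    (e : ℕ) (he : e + 1 = D) :
    aeval (distMat G 1) ((Polynomial.X - C (p (e+1) 1 (e+1) : ℂ)) * vp p (e+1)
      - C (p e 1 (e+1) : ℂ) * vp p e) = 0 := by
  simp only [map_sub, _root_.map_mul, aeval_X, aeval_C]
  rw [aeval_vp G D p hdrg (e+1) (by omega), aeval_vp G D p hdrg e (by omega),
    Algebra.algebraMap_eq_smul_one, Algebra.algebraMap_eq_smul_one,
    sub_mul, smul_mul_assoc, smul_mul_assoc, one_mul, one_mul,
    recurrence_top G D p hdrg e he]
  abel

lemma t_no_consec (G : SimpleGraph X) (D : ℕ) (p : ℕ → ℕ → ℕ → ℕ) (hdrg : IsDRG G D p)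
    (θ : ℂ) : ∀ i, i + 1 ≤ D → ¬((vp p i).eval θ = 0 ∧ (vp p (i+1)).eval θ = 0) := by
  intro i
  induction i with
  | zero =>
    rintro _ ⟨h0, -⟩
    simp [vp] at h0
  | succ i ih =>
    rintro hle ⟨h1, h2⟩
    refine ih (by omega) ⟨?_, h1⟩
    have hc : (p (i+2) 1 (i+1) : ℂ) ≠ 0 := c_ne_zero G D p hdrg (by omega)
    have hb : (p i 1 (i+1) : ℂ) ≠ 0 := b_ne_zero G D p hdrg (by omega)
    have h2' : eval θ (vp p (i+2)) = (p (i+2) 1 (i+1) : ℂ)⁻¹ *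
        ((θ - (p (i+1) 1 (i+1) : ℂ)) * eval θ (vp p (i+1))
          - (p i 1 (i+1) : ℂ) * eval θ (vp p i)) := by
      simp [vp, smul_eq_mul]
    rw [h1, mul_zero, zero_sub] at h2'
    have h3 : (p (i+2) 1 (i+1) : ℂ)⁻¹ *
        (-((p i 1 (i+1) : ℂ) * eval θ (vp p i))) = 0 := by rw [← h2', h2]
    rcases mul_eq_zero.mp h3 with h | h
    · exact absurd h (inv_ne_zero hc)
    · rcases mul_eq_zero.mp (neg_eq_zero.mp h) with h | h
      · exact absurd h hb
      · exact h

end Stmt12Aux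

set_option linter.unusedSectionVars false in
lemma Stmt12Aux.distMat_one_herm (G : SimpleGraph X) : (distMat G 1).IsHermitian := by
  ext y z
  simp only [Matrix.conjTranspose_apply, distMat, Matrix.of_apply]
  rw [SimpleGraph.dist_comm]
  split <;> simp


/-- Let `θ` be an eigenvalue of `A` and let `E` be a nonzero element of
`M` with `A E = θ E`.  Then `M(θ) = ℂ E`. -/
theorem stmt12 (G : SimpleGraph X) (D : ℕ) (p : ℕ → ℕ → ℕ → ℕ)
    (hdrg : IsDRG G D p) (hD : 3 ≤ D)
    (θ : ℂ) (hθ : Module.End.HasEigenvalue (Matrix.mulVecLin (distMat G 1)) θ)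
    (E : Matrix X X ℂ) (hE0 : E ≠ 0) (hEM : E ∈ bmAlg G)
    (hAE : distMat G 1 * E = θ • E) :
    pseudoSpace G D θ = Submodule.span ℂ {E} := by
  classical
  obtain ⟨e, he⟩ : ∃ e : ℕ, e + 1 = D := ⟨D - 1, by omega⟩
  obtain ⟨g, hg⟩ : ∃ g : ℂ[X], aeval (distMat G 1) g = E := by
    rw [bmAlg, Algebra.adjoin_singleton_eq_range_aeval] at hEM
    exact hEM
  obtain ⟨v, hv⟩ := hθ.exists_hasEigenvector
  have hvz : v ≠ 0 := hv.right
  have hAv : distMat G 1 *ᵥ v = θ • v := by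
    have := hv.apply_eq_smul
    simpa [Matrix.mulVecLin_apply] using this
  have hm0 := Stmt12Aux.aeval_mpoly G D p hdrg e he
  have hmθ : Polynomial.eval θ ((Polynomial.X - Polynomial.C (p (e+1) 1 (e+1) : ℂ)) *
      Stmt12Aux.vp p (e+1) - Polynomial.C (p e 1 (e+1) : ℂ) * Stmt12Aux.vp p e) = 0 := by
    have h2 := Stmt12Aux.aeval_mulVec_eigen (distMat G 1) v θ hAv
      ((Polynomial.X - Polynomial.C (p (e+1) 1 (e+1) : ℂ)) * Stmt12Aux.vp p (e+1)
        - Polynomial.C (p e 1 (e+1) : ℂ) * Stmt12Aux.vp p e)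
    rw [hm0, Matrix.zero_mulVec] at h2
    exact (smul_eq_zero.mp h2.symm).resolve_right hvz
  have htD : Polynomial.eval θ (Stmt12Aux.vp p (e+1)) ≠ 0 := by
    intro h0
    apply Stmt12Aux.t_no_consec G D p hdrg θ e (by omega)
    refine ⟨?_, h0⟩
    rw [Polynomial.eval_sub, Polynomial.eval_mul, Polynomial.eval_mul, Polynomial.eval_sub,
      Polynomial.eval_X, Polynomial.eval_C, Polynomial.eval_C, h0, mul_zero, zero_sub,
      neg_eq_zero] at hmθ
    rcases mul_eq_zero.mp hmθ with h | h
    · exact absurd h (Stmt12Aux.b_ne_zero G D p hdrg (by omega))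
    · exact h
  have hvpD : aeval (distMat G 1) (Stmt12Aux.vp p (e+1)) = distMat G (D : ℤ) := by
    rw [Stmt12Aux.aeval_vp G D p hdrg (e+1) (by omega), he]
  have hADE : distMat G (D : ℤ) * E = Polynomial.eval θ (Stmt12Aux.vp p (e+1)) • E := by
    rw [← hvpD]; exact Stmt12Aux.aeval_mul_eigen (distMat G 1) E θ hAE _
  have hEcomm : E * distMat G (D : ℤ) = distMat G (D : ℤ) * E := by
    rw [← hg, ← hvpD]; exact Stmt12Aux.aeval_comm (distMat G 1) g _
  have hEA1 : E * distMat G 1 = θ • E := by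
    have hcm := Stmt12Aux.aeval_comm (distMat G 1) g Polynomial.X
    rw [aeval_X, hg] at hcm
    rw [hcm, hAE]
  apply le_antisymm
  · intro Y hY
    simp only [pseudoSpace, Submodule.mem_inf, Subalgebra.mem_toSubmodule,
      Submodule.mem_comap, LinearMap.mulLeft_apply] at hY
    obtain ⟨hY1, hY2⟩ := hY
    obtain ⟨f, hf⟩ : ∃ f : ℂ[X], aeval (distMat G 1) f = Y := by
      rw [bmAlg, Algebra.adjoin_singleton_eq_range_aeval] at hY1
      exact hY1
    obtain ⟨c, hcY⟩ := Submodule.mem_span_singleton.mp hY2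
    have hEAzero : E * (distMat G 1 - θ • 1) = 0 := by
      rw [mul_sub, mul_smul_comm, mul_one, hEA1, sub_self]
    have hc0 : c = 0 := by
      have h1 : E * ((distMat G 1 - θ • (1 : Matrix X X ℂ)) * Y) = 0 := by
        rw [← mul_assoc, hEAzero, zero_mul]
      rw [← hcY, mul_smul_comm, hEcomm, hADE, smul_smul] at h1
      rcases smul_eq_zero.mp h1 with h | h
      · exact (mul_eq_zero.mp h).resolve_right htD
      · exact absurd h hE0
    have hAY : distMat G 1 * Y = θ • Y := by
      have h2 : (distMat G 1 - θ • (1 : Matrix X X ℂ)) * Y = 0 := by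
        rw [← hcY, hc0, zero_smul]
      rw [sub_mul, smul_mul_assoc, one_mul, sub_eq_zero] at h2
      exact h2
    have hgθ : Polynomial.eval θ g ≠ 0 := by
      intro h0
      apply hE0
      rw [← hg]
      exact Stmt12Aux.aeval_eq_zero_of_root (distMat G 1) (Stmt12Aux.distMat_one_herm G) θ g h0
        (by rw [hg]; exact hAE)
    have h1 : E * Y = Polynomial.eval θ g • Y := by
      rw [← hg]; exact Stmt12Aux.aeval_mul_eigen (distMat G 1) Y θ hAY g
    have h2 : E * Y = Polynomial.eval θ f • E := by
      calc E * Y = aeval (distMat G 1) g * aeval (distMat G 1) f := by rw [hg, hf]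
        _ = aeval (distMat G 1) f * aeval (distMat G 1) g :=
          Stmt12Aux.aeval_comm (distMat G 1) g f
        _ = aeval (distMat G 1) f * E := by rw [hg]
        _ = Polynomial.eval θ f • E := Stmt12Aux.aeval_mul_eigen (distMat G 1) E θ hAE f
    rw [Submodule.mem_span_singleton]
    refine ⟨(Polynomial.eval θ g)⁻¹ * Polynomial.eval θ f, ?_⟩
    calc ((Polynomial.eval θ g)⁻¹ * Polynomial.eval θ f) • E
        = (Polynomial.eval θ g)⁻¹ • (Polynomial.eval θ f • E) := mul_smul _ _ _
      _ = (Polynomial.eval θ g)⁻¹ • (E * Y) := by rw [h2]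
      _ = (Polynomial.eval θ g)⁻¹ • (Polynomial.eval θ g • Y) := by rw [h1]
      _ = Y := by rw [smul_smul, inv_mul_cancel₀ hgθ, one_smul]
  · rw [Submodule.span_le, Set.singleton_subset_iff]
    simp only [SetLike.mem_coe, pseudoSpace, Submodule.mem_inf, Subalgebra.mem_toSubmodule,
      Submodule.mem_comap, LinearMap.mulLeft_apply]
    refine ⟨hEM, ?_⟩
    have hz : (distMat G 1 - θ • (1 : Matrix X X ℂ)) * E = 0 := by
      rw [sub_mul, smul_mul_assoc, one_mul, hAE, sub_self]
    rw [hz]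
    exact Submodule.zero_mem _
end
end

section
/- Let v be a nonzero vector in E_1*V which is an eigenvector for E_1*AE_1*, say E_1*AE_1*v = ηv. Then η ≠ −1 − b_1/(k+1); equivalently, the value η̃ associated to η is not equal to the valency k (where η̃ = −1 − b_1/(1+η) if η ≠ −1, and η̃ = ∞ if η = −1). -/
open Matrix Polynomial BigOperators

noncomputable section

variable {X : Type*} [Fintype X] [DecidableEq X]

section Aux

variable {X : Type*} [Fintype X] [DecidableEq X]

private lemma aux_dist_getVert_le (G : SimpleGraph X) {u v : X} (p : G.Walk u v) (n : ℕ) :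
    G.dist (p.getVert n) v ≤ p.length - n := by
  induction p generalizing n with
  | nil => simp [SimpleGraph.Walk.getVert, SimpleGraph.dist_self]
  | cons h q ih =>
    cases n with
    | zero => simpa using SimpleGraph.dist_le (SimpleGraph.Walk.cons h q)
    | succ n => simpa [SimpleGraph.Walk.getVert_cons_succ] using ih n

private lemma aux_eval_charpoly (M : Matrix X X ℂ) (v : X → ℂ) (hv : v ≠ 0) (η : ℂ)
    (h : M.mulVec v = η • v) : Polynomial.eval η M.charpoly = 0 := by
  have hdet : (η • (1 : Matrix X X ℂ) - M).det = 0 := by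
    rw [← Matrix.exists_mulVec_eq_zero_iff]
    refine ⟨v, hv, ?_⟩
    rw [Matrix.sub_mulVec, Matrix.smul_mulVec, Matrix.one_mulVec, h, sub_self]
  have hmap : (Matrix.charmatrix M).map (Polynomial.evalRingHom η)
      = η • (1 : Matrix X X ℂ) - M := by
    ext i j
    by_cases hij : i = j <;>
      simp [Matrix.charmatrix_apply, Matrix.map_apply, Matrix.diagonal_apply,
        Matrix.one_apply, hij]
  have hh := RingHom.map_det (Polynomial.evalRingHom η) (Matrix.charmatrix M)
  rw [Matrix.charpoly]
  calc Polynomial.eval η (Matrix.charmatrix M).det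
      = ((Matrix.charmatrix M).map (Polynomial.evalRingHom η)).det := hh
    _ = 0 := by rw [hmap, hdet]

private lemma aux_not_integral (b k : ℕ) (hb1 : 1 ≤ b) (hbk : b ≤ k) (η : ℂ)
    (hint : IsIntegral ℤ η) (heq : η = -1 - (b : ℂ) / ((k : ℂ) + 1)) : False := by
  set q : ℚ := -1 - (b : ℚ) / ((k : ℚ) + 1) with hq
  have hcast : (q : ℂ) = η := by rw [heq, hq]; push_cast; ring
  have h1 : IsIntegral ℤ (algebraMap ℚ ℂ q) := by
    rwa [eq_ratCast (algebraMap ℚ ℂ) q, hcast]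
  have h2 : IsIntegral ℤ q := (isIntegral_algebraMap_iff (algebraMap ℚ ℂ).injective).mp h1
  obtain ⟨m, hm⟩ := IsIntegrallyClosed.isIntegral_iff.mp h2
  have hk1 : ((k : ℚ) + 1) ≠ 0 := by positivity
  have hbq : (b : ℚ) = (-1 - m) * ((k : ℚ) + 1) := by
    have h3 : (m : ℚ) = -1 - (b : ℚ) / ((k : ℚ) + 1) := by rw [← hq, ← hm]; simp
    field_simp at h3
    linarith [h3]
  have hbz : (b : ℤ) = (-1 - m) * ((k : ℤ) + 1) := by exact_mod_cast hbq
  have hdvd : ((k : ℤ) + 1) ∣ (b : ℤ) := ⟨-1 - m, by linarith [hbz]⟩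
  have hle := Int.le_of_dvd (by exact_mod_cast hb1) hdvd
  omega

/-- Integer version of the adjacency matrix. -/
private def distMatZ (G : SimpleGraph X) : Matrix X X ℤ :=
  Matrix.of fun y z => if (G.dist y z : ℤ) = 1 then (1 : ℤ) else 0

/-- Integer version of the dual idempotent `E₁*`. -/
private def dualIdemZ (G : SimpleGraph X) (x : X) : Matrix X X ℤ :=
  Matrix.of fun y z => if y = z ∧ (G.dist x y : ℤ) = 1 then (1 : ℤ) else 0

end Aux

/-- Let `v` be a nonzero vector in `E₁* V` which is an eigenvector for
`E₁* A E₁*` with eigenvalue `η`.  Then `η ≠ -1 - b₁/(k+1)`, i.e. `η̃ ≠ k`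
(here `b₁ = p 1 1 2` and `k = p 0 1 1` is the valency). -/
theorem stmt13 (G : SimpleGraph X) (D : ℕ) (p : ℕ → ℕ → ℕ → ℕ)
    (hdrg : IsDRG G D p) (hD : 3 ≤ D) (x : X)
    (v : X → ℂ) (hv : v ≠ 0) (hvE1 : (dualIdem G x 1).mulVec v = v)
    (η : ℂ)
    (heig : (dualIdem G x 1 * distMat G 1 * dualIdem G x 1).mulVec v = η • v) :
    η ≠ -1 - (p 1 1 2 : ℂ) / ((p 0 1 1 : ℂ) + 1) := by
  intro hcontra
  obtain ⟨hconn, hle, ⟨y, z, hyz⟩, hcount⟩ := hdrg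
  -- set up the geodesic vertices
  obtain ⟨W, hW⟩ := hconn.exists_walk_length_eq_dist y z
  rw [hyz] at hW
  set v1 := W.getVert 1 with hv1
  set v2 := W.getVert 2 with hv2
  have h01 : G.Adj y v1 := by
    have := W.adj_getVert_succ (i := 0) (by omega)
    rwa [W.getVert_zero] at this
  have h12 : G.Adj v1 v2 := W.adj_getVert_succ (i := 1) (by omega)
  have d01 : G.dist y v1 = 1 := SimpleGraph.dist_eq_one_iff_adj.mpr h01
  have d12 : G.dist v1 v2 = 1 := SimpleGraph.dist_eq_one_iff_adj.mpr h12
  have dv2z : G.dist v2 z ≤ D - 2 := by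
    have := aux_dist_getVert_le G W 2
    rwa [hW] at this
  have d02 : G.dist y v2 = 2 := by
    have hled : G.dist y v2 ≤ 2 := by
      have := hconn.dist_triangle (u := y) (v := v1) (w := v2)
      omega
    have hged : 2 ≤ G.dist y v2 := by
      have := hconn.dist_triangle (u := y) (v := v2) (w := z)
      omega
    omega
  -- the two intersection numbers
  have hk : (Finset.univ.filter fun w => G.dist v1 w = 1 ∧ G.dist w v1 = 1).card = p 0 1 1 :=
    hcount 0 1 1 (by omega) (by omega) (by omega) v1 v1 (SimpleGraph.dist_self)
  have hb : (Finset.univ.filter fun w => G.dist v1 w = 1 ∧ G.dist w y = 2).card = p 1 1 2 :=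
    hcount 1 1 2 (by omega) (by omega) (by omega) v1 y (by rw [SimpleGraph.dist_comm]; exact d01)
  have hb1 : 1 ≤ p 1 1 2 := by
    rw [← hb]
    exact Finset.card_pos.mpr ⟨v2, by simp [d12, SimpleGraph.dist_comm (u := v2) (v := y), d02]⟩
  have hbk : p 1 1 2 ≤ p 0 1 1 := by
    rw [← hb, ← hk]
    apply Finset.card_le_card
    intro w hw
    simp only [Finset.mem_filter, Finset.mem_univ, true_and] at hw ⊢
    exact ⟨hw.1, by rw [SimpleGraph.dist_comm]; exact hw.1⟩
  -- η is an algebraic integer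
  have hmapE : (dualIdemZ G x).map (Int.castRingHom ℂ) = dualIdem G x 1 := by
    ext a b
    by_cases h : a = b ∧ (G.dist x a : ℤ) = 1 <;> simp [dualIdemZ, dualIdem, h]
  have hmapA : (distMatZ G).map (Int.castRingHom ℂ) = distMat G 1 := by
    ext a b
    by_cases h : (G.dist a b : ℤ) = 1 <;> simp [distMatZ, distMat, h]
  set Mz : Matrix X X ℤ := dualIdemZ G x * distMatZ G * dualIdemZ G x with hMz
  have hmapM : Mz.map (Int.castRingHom ℂ)
      = dualIdem G x 1 * distMat G 1 * dualIdem G x 1 := by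
    rw [hMz, Matrix.map_mul, Matrix.map_mul, hmapE, hmapA]
  have hint : IsIntegral ℤ η := by
    refine ⟨Mz.charpoly, Matrix.charpoly_monic _, ?_⟩
    rw [Polynomial.eval₂_eq_eval_map, algebraMap_int_eq, ← Matrix.charpoly_map, hmapM]
    exact aux_eval_charpoly _ v hv η heig
  exact aux_not_integral (p 1 1 2) (p 0 1 1) hb1 hbk η hint hcontra
end
end

section
/- Let θ_0 > θ_1 > ⋯ > θ_D denote the distinct eigenvalues of the adjacency matrix A. Let v be a nonzero vector in E_1*V which is orthogonal to s_1 and is an eigenvector for E_1*AE_1*, say E_1*AE_1*v = ηv, with η ≠ −1. Suppose −1 − b_1/(1+θ_1) < η < −1 − b_1/(1+θ_D) (here θ_D < −1 < θ_1, so both bounds are defined). Then η̃ = −1 − b_1/(1+η) is not an eigenvalue of A. -/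
open Matrix Polynomial BigOperators

noncomputable section

variable {X : Type*} [Fintype X] [DecidableEq X]

section Stmt14Helpers

variable {X : Type*} [Fintype X] [DecidableEq X]

set_option linter.unusedSectionVars false in
lemma stmt14_step {G : SimpleGraph X} (hc : G.Connected) {y z : X} {n : ℕ}
    (h : G.dist y z = n + 1) : ∃ w, G.Adj y w ∧ G.dist w z = n := by
  obtain ⟨p, hp⟩ := hc.exists_walk_length_eq_dist y z
  cases p with
  | nil => rw [h] at hp; simp at hp
  | @cons _ w _ hadj q =>
      refine ⟨w, hadj, ?_⟩
      have h1 : q.length = n := by rw [h] at hp; simpa using hp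
      have hle : G.dist w z ≤ n := h1 ▸ SimpleGraph.dist_le q
      have hyw : G.dist y w ≤ 1 := by simpa using SimpleGraph.dist_le hadj.toWalk
      have htri := hc.dist_triangle (u := y) (v := w) (w := z)
      omega

lemma stmt14_mem_spec_of_eig {M : Matrix X X ℂ} {μ : ℂ} {w : X → ℂ} (hw : w ≠ 0)
    (h : M.mulVec w = μ • w) : μ ∈ spectrum ℂ M := by
  rw [spectrum.mem_iff]
  intro hU
  rw [Algebra.algebraMap_eq_smul_one, Matrix.isUnit_iff_isUnit_det, isUnit_iff_ne_zero] at hU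
  apply hU
  rw [← Matrix.exists_mulVec_eq_zero_iff]
  refine ⟨w, hw, ?_⟩
  rw [Matrix.sub_mulVec, Matrix.smul_mulVec, Matrix.one_mulVec, h, sub_self]

lemma stmt14_eig_of_mem_spec {M : Matrix X X ℂ} {μ : ℂ} (h : μ ∈ spectrum ℂ M) :
    ∃ w, w ≠ 0 ∧ M.mulVec w = μ • w := by
  rw [spectrum.mem_iff, Algebra.algebraMap_eq_smul_one, Matrix.isUnit_iff_isUnit_det,
    isUnit_iff_ne_zero, not_not, ← Matrix.exists_mulVec_eq_zero_iff] at h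
  obtain ⟨w, hw, hmul⟩ := h
  refine ⟨w, hw, ?_⟩
  rw [Matrix.sub_mulVec, Matrix.smul_mulVec, Matrix.one_mulVec, sub_eq_zero] at hmul
  exact hmul.symm

lemma stmt14_eval_charpoly (M : Matrix X X ℂ) (μ : ℂ) :
    M.charpoly.eval μ = (μ • (1 : Matrix X X ℂ) - M).det := by
  rw [Matrix.charpoly, eval_det, Matrix.matPolyEquiv_charmatrix]
  simp [Polynomial.eval_sub, Matrix.scalar_apply]
  congr 1
  rw [Matrix.smul_one_eq_diagonal]

lemma stmt14_rat_int_contra {b k : ℕ} (hb : 1 ≤ b) (hbk : b ≤ k)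
    (hint : IsIntegral ℤ ((-1 - (b:ℚ)/((k:ℚ)+1)) : ℚ)) : False := by
  letI : IsIntegrallyClosed ℤ := GCDMonoid.toIsIntegrallyClosed
  obtain ⟨z, hz⟩ := IsIntegrallyClosed.isIntegral_iff.mp hint
  have hkpos : (0:ℚ) < (k:ℚ) + 1 := by positivity
  have h1 : (0:ℚ) < (b:ℚ)/((k:ℚ)+1) := by
    apply div_pos _ hkpos
    exact_mod_cast hb
  have h2 : (b:ℚ)/((k:ℚ)+1) < 1 := by
    rw [div_lt_one hkpos]
    exact_mod_cast Nat.lt_succ_of_le hbk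
  have hz' : (z:ℚ) = -1 - (b:ℚ)/((k:ℚ)+1) := by exact_mod_cast hz
  have hlt1 : (z:ℚ) < -1 := by rw [hz']; linarith
  have hlt2 : (-2:ℚ) < (z:ℚ) := by rw [hz']; linarith
  have h3 : z < -1 := by exact_mod_cast hlt1
  have h4 : (-2:ℤ) < z := by exact_mod_cast hlt2
  omega

lemma stmt14_int_matrix_eig_isIntegral (B₀ : Matrix X X ℤ) {μ : ℂ} {w : X → ℂ} (hw : w ≠ 0)
    (h : (B₀.map (Int.cast : ℤ → ℂ)).mulVec w = μ • w) : IsIntegral ℤ μ := by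
  refine ⟨B₀.charpoly, B₀.charpoly_monic, ?_⟩
  have hdet : (μ • (1 : Matrix X X ℂ) - B₀.map (Int.cast : ℤ → ℂ)).det = 0 := by
    rw [← Matrix.exists_mulVec_eq_zero_iff]
    refine ⟨w, hw, ?_⟩
    rw [Matrix.sub_mulVec, Matrix.smul_mulVec, Matrix.one_mulVec, h, sub_self]
  have hmap : B₀.charpoly.map (algebraMap ℤ ℂ) = (B₀.map (Int.cast : ℤ → ℂ)).charpoly := by
    have h0 : B₀.map (Int.cast : ℤ → ℂ) = B₀.map (Int.castRingHom ℂ) := rfl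
    rw [h0, Matrix.charpoly_map B₀ (Int.castRingHom ℂ)]
    rfl
  rw [Polynomial.eval₂_eq_eval_map, hmap, stmt14_eval_charpoly, hdet]

lemma stmt14_descend_rat {q : ℚ} (h : IsIntegral ℤ ((q : ℂ))) : IsIntegral ℤ q := by
  have h0 : (q : ℂ) = algebraMap ℚ ℂ q := rfl
  rw [h0] at h
  exact (isIntegral_algebraMap_iff (algebraMap ℚ ℂ).injective).mp h

set_option linter.unusedSectionVars false in
lemma stmt14_eig_bound {G : SimpleGraph X} {k : ℕ}
    (hreg : ∀ y : X, (Finset.univ.filter fun z => G.dist y z = 1).card = k)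
    {μ : ℂ} (h : μ ∈ spectrum ℂ (distMat G 1)) : ‖μ‖ ≤ k := by
  obtain ⟨w, hw, hmul⟩ := stmt14_eig_of_mem_spec h
  obtain ⟨y₀, hy₀⟩ := Function.ne_iff.mp hw
  obtain ⟨y, -, hy⟩ := Finset.exists_max_image Finset.univ (fun y => ‖w y‖)
    ⟨y₀, Finset.mem_univ _⟩
  have hypos : 0 < ‖w y‖ := by
    refine lt_of_lt_of_le ?_ (hy y₀ (Finset.mem_univ _))
    simpa using hy₀
  have hrow : (distMat G 1).mulVec w y
      = ∑ z ∈ Finset.univ.filter (fun z => G.dist y z = 1), w z := by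
    rw [Finset.sum_filter]
    simp only [Matrix.mulVec, dotProduct, distMat, Matrix.of_apply]
    refine Finset.sum_congr rfl fun z _ => ?_
    have hcast : ((G.dist y z : ℤ) = 1) ↔ (G.dist y z = 1) := by exact_mod_cast Iff.rfl
    split_ifs with h1 h2 h2 <;> simp_all
  have hμ : μ * w y = ∑ z ∈ Finset.univ.filter (fun z => G.dist y z = 1), w z := by
    rw [← hrow, hmul]; simp
  have habs : ‖μ‖ * ‖w y‖ ≤ (k : ℝ) * ‖w y‖ := by
    rw [← norm_mul, hμ]
    calc ‖∑ z ∈ Finset.univ.filter (fun z => G.dist y z = 1), w z‖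
        ≤ ∑ z ∈ Finset.univ.filter (fun z => G.dist y z = 1), ‖w z‖ :=
          norm_sum_le _ _
      _ ≤ ∑ _z ∈ Finset.univ.filter (fun z => G.dist y z = 1), ‖w y‖ :=
          Finset.sum_le_sum fun z _ => hy z (Finset.mem_univ _)
      _ = (k : ℝ) * ‖w y‖ := by
          rw [Finset.sum_const, hreg y, nsmul_eq_mul]
  exact le_of_mul_le_mul_right habs hypos

lemma stmt14_sandwich (G : SimpleGraph X) (x : X) :
    (Matrix.of fun y z : X =>
        if (G.dist x y : ℤ) = 1 ∧ (G.dist y z : ℤ) = 1 ∧ (G.dist x z : ℤ) = 1 then (1:ℤ) else 0).map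
      (Int.cast : ℤ → ℂ) = dualIdem G x 1 * distMat G 1 * dualIdem G x 1 := by
  have h1 : ∀ y z : X, (dualIdem G x 1 * distMat G 1) y z
      = (if (G.dist x y : ℤ) = 1 then distMat G 1 y z else 0) := by
    intro y z
    rw [Matrix.mul_apply, Finset.sum_eq_single y]
    · by_cases hp : (G.dist x y : ℤ) = 1 <;> simp [dualIdem, hp]
    · intro u _ hu
      have hnc : ¬(y = u ∧ (G.dist x y : ℤ) = 1) := fun hc => hu hc.1.symm
      simp only [dualIdem, Matrix.of_apply, if_neg hnc, zero_mul]
    · intro h; exact absurd (Finset.mem_univ y) h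
  ext y z
  rw [Matrix.map_apply, Matrix.mul_apply, Finset.sum_eq_single z]
  · rw [h1]
    by_cases hy : (G.dist x y : ℤ) = 1 <;> by_cases hz : (G.dist x z : ℤ) = 1 <;>
      by_cases hyz : (G.dist y z : ℤ) = 1 <;>
      simp [dualIdem, distMat, hy, hz, hyz]
  · intro u _ hu
    have hnc : ¬(u = z ∧ (G.dist x u : ℤ) = 1) := fun hc => hu hc.1
    simp only [dualIdem, Matrix.of_apply, if_neg hnc, mul_zero]
  · intro h; exact absurd (Finset.mem_univ z) h

end Stmt14Helpers

/-- Let `θ₀ > θ₁ > ⋯ > θ_D` be the distinct eigenvalues of `A`.  Let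
`v ≠ 0` lie in `E₁* V`, orthogonal to `s₁`, with `E₁* A E₁* v = η v` and `η ≠ -1`.
If `-1 - b₁/(1+θ₁) < η < -1 - b₁/(1+θ_D)` then `η̃ = -1 - b₁/(1+η)` is not an
eigenvalue of `A`.  Here `b₁ = p 1 1 2`. -/
theorem stmt14 (G : SimpleGraph X) (D : ℕ) (p : ℕ → ℕ → ℕ → ℕ)
    (hdrg : IsDRG G D p) (hD : 3 ≤ D) (x : X)
    (θ : ℕ → ℝ)
    (hmono : ∀ i j : ℕ, i < j → j ≤ D → θ j < θ i)
    (hspec : ∀ i : ℕ, i ≤ D → ((θ i : ℂ)) ∈ spectrum ℂ (distMat G 1))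
    (hall : ∀ μ : ℂ, μ ∈ spectrum ℂ (distMat G 1) → ∃ i : ℕ, i ≤ D ∧ μ = (θ i : ℂ))
    (v : X → ℂ) (hv : v ≠ 0) (hvE1 : (dualIdem G x 1).mulVec v = v)
    (horth : ∑ y : X, v y * (starRingEnd ℂ) (sphereVec G x 1 y) = 0)
    (η : ℝ)
    (heig : (dualIdem G x 1 * distMat G 1 * dualIdem G x 1).mulVec v = (η : ℂ) • v)
    (hη : η ≠ -1)
    (hlow : -1 - (p 1 1 2 : ℝ) / (1 + θ 1) < η)
    (hhigh : η < -1 - (p 1 1 2 : ℝ) / (1 + θ D)) :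
    ((-1 - (p 1 1 2 : ℝ) / (1 + η) : ℝ) : ℂ) ∉ spectrum ℂ (distMat G 1) := by
  classical
  obtain ⟨hconn, hle, ⟨y₀, z₀, hyz⟩, hcount⟩ := hdrg
  -- regularity: every vertex has degree p 0 1 1
  have hreg : ∀ y : X, (Finset.univ.filter fun z => G.dist y z = 1).card = p 0 1 1 := by
    intro y
    have h := hcount 0 1 1 (by omega) (by omega) (by omega) y y (by rw [SimpleGraph.dist_self])
    rw [← h]
    congr 1
    apply Finset.filter_congr
    intro z _
    constructor
    · exact fun hzz => ⟨hzz, by rwa [SimpleGraph.dist_comm]⟩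
    · exact fun hzz => hzz.1
  -- geodesic of length 3
  obtain ⟨u₁, ha1, hd1⟩ := stmt14_step hconn (show G.dist y₀ z₀ = (D-1) + 1 by omega)
  obtain ⟨u₂, ha2, hd2⟩ := stmt14_step hconn (show G.dist u₁ z₀ = (D-2) + 1 by omega)
  have hdy1 : G.dist y₀ u₁ = 1 := SimpleGraph.dist_eq_one_iff_adj.mpr ha1
  have hdy12 : G.dist u₁ u₂ = 1 := SimpleGraph.dist_eq_one_iff_adj.mpr ha2
  have htri1 := hconn.dist_triangle (u := y₀) (v := u₁) (w := u₂)
  have htri2 := hconn.dist_triangle (u := y₀) (v := u₂) (w := z₀)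
  have hdist2 : G.dist y₀ u₂ = 2 := by omega
  have hb1 : 1 ≤ p 1 1 2 := by
    have h := hcount 1 1 2 (by omega) (by omega) (by omega) u₁ u₂ hdy12
    rw [← h, Nat.one_le_iff_ne_zero, ← Nat.pos_iff_ne_zero, Finset.card_pos]
    refine ⟨y₀, Finset.mem_filter.mpr ⟨Finset.mem_univ _, ?_, hdist2⟩⟩
    rwa [SimpleGraph.dist_comm]
  have hbk : p 1 1 2 ≤ p 0 1 1 := by
    have h := hcount 1 1 2 (by omega) (by omega) (by omega) u₁ u₂ hdy12
    rw [← h, ← hreg u₁]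
    apply Finset.card_le_card
    intro w hw
    rw [Finset.mem_filter] at hw ⊢
    exact ⟨hw.1, hw.2.1⟩
  intro hmem
  obtain ⟨j, hjD, hjeq⟩ := hall _ hmem
  have hθj : θ j = -1 - (p 1 1 2 : ℝ)/(1+η) := by
    have h := hjeq.symm
    exact_mod_cast h
  have hηne : (1:ℝ) + η ≠ 0 := fun hc => hη (by linarith)
  have hb1R : (1:ℝ) ≤ (p 1 1 2 : ℝ) := by exact_mod_cast hb1
  have key : (1 + θ j) * (1 + η) = -(p 1 1 2 : ℝ) := by
    rw [hθj]
    field_simp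
    ring
  rcases lt_trichotomy (θ j) (-1 : ℝ) with hc | hc | hc
  · -- θ j < -1
    have hsneg : 1 + θ j < 0 := by linarith
    have htpos : 0 < 1 + η := by nlinarith
    have hDj : θ D ≤ θ j := by
      rcases eq_or_lt_of_le hjD with h | h
      · rw [h]
      · exact le_of_lt (hmono j D h le_rfl)
    have hdneg : 1 + θ D < 0 := by linarith
    have h5 : -(p 1 1 2:ℝ) < (1+η)*(1+θ D) := by
      have h6 : (1+η) < -((p 1 1 2:ℝ)/(1+θ D)) := by linarith
      have h7 := mul_lt_mul_of_neg_right h6 hdneg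
      have h8 : -((p 1 1 2:ℝ)/(1+θ D)) * (1+θ D) = -(p 1 1 2:ℝ) := by
        rw [neg_mul, div_mul_cancel₀ _ (ne_of_lt hdneg)]
      linarith
    nlinarith [mul_le_mul_of_nonneg_left (show 1+θ D ≤ 1+θ j by linarith) (le_of_lt htpos)]
  · -- θ j = -1
    rw [hc] at key
    norm_num at key
    linarith
  · -- θ j > -1
    have hspos : 0 < 1 + θ j := by linarith
    by_cases hj0 : j = 0
    · -- j = 0 : then θ 0 is the valency and we use integrality of η
      subst hj0
      have honev : (distMat G 1).mulVec (fun _ => (1:ℂ))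
          = (((p 0 1 1 : ℕ) : ℂ)) • (fun _ => (1:ℂ)) := by
        funext y
        simp only [Matrix.mulVec, dotProduct, distMat, Matrix.of_apply, mul_one,
          Pi.smul_apply, smul_eq_mul]
        rw [Finset.sum_boole]
        congr 1
        rw [← hreg y]
        congr 1
        apply Finset.filter_congr
        intro z _
        exact_mod_cast Iff.rfl
      have hone_ne : (fun _ : X => (1:ℂ)) ≠ 0 := by
        intro hcon
        have := congrFun hcon y₀
        simp at this
      have hkspec := stmt14_mem_spec_of_eig hone_ne honev
      obtain ⟨i, hiD, hik⟩ := hall _ hkspec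
      have hki : ((p 0 1 1 : ℕ) : ℝ) = θ i := by exact_mod_cast hik
      have hθ0le : θ 0 ≤ ((p 0 1 1 : ℕ) : ℝ) := by
        have hb := stmt14_eig_bound hreg (hspec 0 (by omega))
        rw [Complex.norm_real] at hb
        calc θ 0 ≤ |θ 0| := le_abs_self _
          _ ≤ _ := hb
      have hiθ : θ i ≤ θ 0 := by
        rcases Nat.eq_zero_or_pos i with h | h
        · rw [h]
        · exact le_of_lt (hmono 0 i h hiD)
      have hθ0k : θ 0 = ((p 0 1 1 : ℕ) : ℝ) := le_antisymm hθ0le (by rw [hki]; exact hiθ)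
      have hkpos : (0:ℝ) < ((p 0 1 1:ℕ):ℝ) + 1 := by positivity
      have hηq : η = -1 - ((p 1 1 2:ℕ):ℝ)/(((p 0 1 1:ℕ):ℝ)+1) := by
        rw [hθ0k] at key
        have h11 : ((p 1 1 2:ℕ):ℝ)/(((p 0 1 1:ℕ):ℝ)+1) = -(1+η) := by
          rw [div_eq_iff (ne_of_gt hkpos)]
          linear_combination key
        linarith
      have heig' : ((Matrix.of fun y z : X =>
          if (G.dist x y : ℤ) = 1 ∧ (G.dist y z : ℤ) = 1 ∧ (G.dist x z : ℤ) = 1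
          then (1:ℤ) else 0).map (Int.cast : ℤ → ℂ)).mulVec v = ((η:ℝ):ℂ) • v := by
        rw [stmt14_sandwich G x]
        exact heig
      have hint := stmt14_int_matrix_eig_isIntegral _ hv heig'
      have hq : ((η:ℝ):ℂ) = (((-1 - (p 1 1 2:ℚ)/((p 0 1 1:ℚ)+1)) : ℚ) : ℂ) := by
        rw [hηq]
        push_cast
        ring
      rw [hq] at hint
      exact stmt14_rat_int_contra hb1 hbk (stmt14_descend_rat hint)
    · -- j ≥ 1
      have hj1 : 1 ≤ j := Nat.one_le_iff_ne_zero.mpr hj0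
      have hjθ : θ j ≤ θ 1 := by
        rcases eq_or_lt_of_le hj1 with h | h
        · rw [← h]
        · exact le_of_lt (hmono 1 j h hjD)
      have hs1pos : 0 < 1 + θ 1 := by linarith
      have hcompare : (p 1 1 2:ℝ)/(1+θ 1) ≤ (p 1 1 2:ℝ)/(1+θ j) := by
        apply div_le_div_of_nonneg_left (by linarith) hspos (by linarith)
      have hηeq : η = -1 - (p 1 1 2:ℝ)/(1+θ j) := by
        have h11 : (p 1 1 2:ℝ)/(1+θ j) = -(1+η) := by
          rw [div_eq_iff (ne_of_gt hspos)]
          linear_combination key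
        linarith
      linarith
end
end
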